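/- arXiv:1508.01784 — 6 statements merged into one kernel-verified Lean document; each statement's English description precedes it below -/
import Mathlib

section
/- Let G be a graph of order n with signless Laplacian eigenvalues q_1 ≥ … ≥ q_n. Then every set of edges whose deletion from G leaves a bipartite graph has size at least q_n·n/4; that is, one must remove at least q_min(G)·n/4 edges to make G bipartite. -/
open Matrix SimpleGraph Finset

/-- The signless Laplacian matrix `Q(G) = D + A` of a finite simple graph `G`. -/
noncomputable def signlessLaplacian {V : Type} [Fintype V] [DecidableEq V]
    (G : SimpleGraph V) : Matrix V V ℝ :=
  letI := Classical.decRel G.Adj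
  Matrix.diagonal (fun v => (G.degree v : ℝ)) + G.adjMatrix ℝ

theorem signlessLaplacian_isHermitian {V : Type} [Fintype V] [DecidableEq V]
    (G : SimpleGraph V) : (signlessLaplacian G).IsHermitian := by
  letI := Classical.decRel G.Adj
  unfold signlessLaplacian
  refine Matrix.IsHermitian.add (Matrix.isHermitian_diagonal _) ?_
  rw [Matrix.IsHermitian, conjTranspose_eq_transpose_of_trivial]
  exact G.isSymm_adjMatrix

/-- `qmin G` is the smallest eigenvalue of the signless Laplacian of `G`. -/
noncomputable def qmin {V : Type} [Fintype V] [DecidableEq V] (G : SimpleGraph V) : ℝ :=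
  ⨅ i, (signlessLaplacian_isHermitian G).eigenvalues i

lemma rayleigh_aux {m : Type} [Fintype m] [DecidableEq m] [Nonempty m] {A : Matrix m m ℝ}
    (hA : A.IsHermitian) (x : m → ℝ) :
    (⨅ i, hA.eigenvalues i) * (x ⬝ᵥ x) ≤ x ⬝ᵥ (A *ᵥ x) := by
  set U : Matrix m m ℝ := (hA.eigenvectorUnitary : Matrix m m ℝ) with hU
  set y : m → ℝ := star U *ᵥ x with hy
  have hstar : star U = Uᵀ := by
    rw [Matrix.star_eq_conjTranspose, conjTranspose_eq_transpose_of_trivial]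
  have h1 : x ⬝ᵥ (A *ᵥ x) = ∑ i, hA.eigenvalues i * (y i)^2 := by
    conv_lhs => rw [hA.spectral_theorem, Unitary.conjStarAlgAut_apply]
    rw [← mulVec_mulVec, ← mulVec_mulVec, dotProduct_mulVec]
    have hxU : x ᵥ* U = y := by rw [hy, hstar, mulVec_transpose]
    rw [hxU]
    simp [dotProduct, mulVec_diagonal, pow_two, mul_comm, mul_assoc, mul_left_comm]
    rfl
  have h2 : x ⬝ᵥ x = ∑ i, (y i)^2 := by
    have : y ⬝ᵥ y = x ⬝ᵥ x := by
      rw [hy, dotProduct_mulVec, hstar, vecMul_transpose, mulVec_mulVec]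
      have : U * Uᵀ = 1 := by
        have := (Matrix.mem_unitaryGroup_iff).mp hA.eigenvectorUnitary.2
        rwa [hstar] at this
      rw [this, one_mulVec]
    rw [← this]
    simp [dotProduct, pow_two]
  rw [h1, h2, Finset.mul_sum]
  apply Finset.sum_le_sum
  intro i _
  exact mul_le_mul_of_nonneg_right (ciInf_le (Finite.bddBelow_range _) i) (sq_nonneg _)

/-- If removing the edge set `F` from `G` leaves a bipartite graph
(i.e. a 2-colorable graph), then `|F| ≥ qmin(G)·n/4`. -/
theorem qmin_le_makeBipartite {n : ℕ} (G : SimpleGraph (Fin n))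
    (F : Finset (Sym2 (Fin n))) (hF : ↑F ⊆ G.edgeSet)
    (hbip : (G.deleteEdges ↑F).Colorable 2) :
    qmin G * n / 4 ≤ F.card := by
  rcases Nat.eq_zero_or_pos n with hn | hn
  · subst hn; simp
  haveI : Nonempty (Fin n) := ⟨⟨0, hn⟩⟩
  letI := Classical.decRel G.Adj
  obtain ⟨c⟩ := hbip
  set x : Fin n → ℝ := fun v => if c v = 0 then 1 else -1 with hxdef
  have hxsq : ∀ v, x v * x v = 1 := by
    intro v; by_cases h : c v = 0 <;> simp [hxdef, h]
  -- the quadratic form equals 2 * number of monochromatic ordered adjacent pairs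
  have fin2 : ∀ a : Fin 2, a = 0 ∨ a = 1 := by decide
  have hprod : ∀ u w : Fin n, (1 : ℝ) + x u * x w = if c u = c w then 2 else 0 := by
    intro u w
    rcases fin2 (c u) with h1 | h1 <;> rcases fin2 (c w) with h2 | h2 <;>
      simp [hxdef, h1, h2] <;> norm_num
  have hquad : x ⬝ᵥ (signlessLaplacian G *ᵥ x)
      = ∑ u, (2 : ℝ) * ((G.neighborFinset u).filter (fun w => c u = c w)).card := by
    unfold signlessLaplacian
    rw [add_mulVec, dotProduct_add]
    have hdeg : x ⬝ᵥ (Matrix.diagonal (fun v => (G.degree v : ℝ)) *ᵥ x)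
        = ∑ u, ∑ _w ∈ G.neighborFinset u, (1 : ℝ) := by
      simp only [dotProduct, mulVec_diagonal, Finset.sum_const, nsmul_eq_mul, mul_one,
        card_neighborFinset_eq_degree]
      congr 1; ext u; rw [mul_comm, mul_assoc, hxsq, mul_one]
    have hadj : x ⬝ᵥ (G.adjMatrix ℝ *ᵥ x)
        = ∑ u, ∑ w ∈ G.neighborFinset u, x u * x w := by
      simp only [dotProduct, adjMatrix_mulVec_apply, Finset.mul_sum]
    rw [hdeg, hadj, ← Finset.sum_add_distrib]
    congr 1; ext u
    rw [← Finset.sum_add_distrib]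
    rw [Finset.sum_congr rfl (fun w _ => hprod u w), ← Finset.sum_filter, Finset.sum_const,
      nsmul_eq_mul, mul_comm]
  -- monochromatic adjacent pairs are ≤ 2 * F.card
  have hcount : ∑ u, ((G.neighborFinset u).filter (fun w => c u = c w)).card ≤ 2 * F.card := by
    set T : Finset (Fin n × Fin n) :=
      Finset.univ.filter (fun p : Fin n × Fin n => G.Adj p.1 p.2 ∧ c p.1 = c p.2) with hT
    have hTcard : ∑ u, ((G.neighborFinset u).filter (fun w => c u = c w)).card = T.card := by
      rw [Finset.card_eq_sum_card_fiberwise (f := Prod.fst) (t := Finset.univ)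
        (fun p _ => Finset.mem_univ _)]
      apply Finset.sum_congr rfl
      intro u _
      apply Finset.card_bij (fun w _ => (u, w))
      · intro w hw
        simp only [Finset.mem_filter, SimpleGraph.mem_neighborFinset] at hw
        simp [hT, hw.1, hw.2]
      · intro a _ b _ h
        exact ((Prod.mk.injEq _ _ _ _).mp h).2
      · intro p hp
        simp only [hT, Finset.mem_filter, Finset.mem_univ, true_and] at hp
        refine ⟨p.2, ?_, ?_⟩
        · simp only [Finset.mem_filter, SimpleGraph.mem_neighborFinset]
          rw [hp.2] at hp
          exact ⟨hp.1.1, hp.1.2⟩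
        · exact Prod.ext hp.2.symm rfl
    rw [hTcard]
    calc T.card ≤ 2 * (T.image (fun p => s(p.1, p.2))).card := by
          apply Finset.card_le_mul_card_image
          intro e he
          induction e with
          | _ a b =>
            have hsub : T.filter (fun p => s(p.1, p.2) = s(a, b)) ⊆ {(a, b), (b, a)} := by
              intro p hp
              rw [Finset.mem_filter] at hp
              rw [Sym2.eq_iff] at hp
              rcases hp.2 with ⟨h1, h2⟩ | ⟨h1, h2⟩
              · simp [← h1, ← h2]
              · simp [← h1, ← h2, Prod.ext_iff]
            calc (T.filter (fun p => s(p.1, p.2) = s(a, b))).card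
                ≤ ({(a, b), (b, a)} : Finset (Fin n × Fin n)).card := Finset.card_le_card hsub
              _ ≤ 2 := Finset.card_insert_le _ _ |>.trans (by simp)
      _ ≤ 2 * F.card := by
          apply Nat.mul_le_mul_left
          apply Finset.card_le_card
          intro e he
          rw [Finset.mem_image] at he
          obtain ⟨p, hp, rfl⟩ := he
          rw [hT, Finset.mem_filter] at hp
          by_contra hnot
          have hadj' : (G.deleteEdges ↑F).Adj p.1 p.2 :=
            (SimpleGraph.deleteEdges_adj).mpr ⟨hp.2.1, hnot⟩
          exact c.valid hadj' hp.2.2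
  -- put things together
  have hxx : x ⬝ᵥ x = (n : ℝ) := by
    simp [dotProduct, hxsq]
  have hlow : qmin G * n ≤ x ⬝ᵥ (signlessLaplacian G *ᵥ x) := by
    rw [← hxx]
    exact rayleigh_aux (signlessLaplacian_isHermitian G) x
  have hup : x ⬝ᵥ (signlessLaplacian G *ᵥ x) ≤ 4 * F.card := by
    rw [hquad, ← Finset.mul_sum]
    have := hcount
    have hcast : (∑ u, (((G.neighborFinset u).filter (fun w => c u = c w)).card : ℝ))
        ≤ 2 * F.card := by
      rw [← Nat.cast_sum]
      exact_mod_cast hcount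
    calc (2 : ℝ) * ∑ u, (((G.neighborFinset u).filter (fun w => c u = c w)).card : ℝ)
        ≤ 2 * (2 * F.card) := by linarith
      _ = 4 * F.card := by ring
  linarith
end

section
/- If G is a triangle-free graph of order n, then the smallest signless Laplacian eigenvalue satisfies q_min(G) < 2n/9. -/
open Matrix SimpleGraph Finset

/-- Rayleigh quotient bound: the smallest eigenvalue of a Hermitian real matrix
bounds the quadratic form from below. -/
lemma rayleigh_le_aux {V : Type} [Fintype V] [DecidableEq V] [Nonempty V]
    (M : Matrix V V ℝ) (hM : M.IsHermitian) (x : V → ℝ) :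
    (⨅ i, hM.eigenvalues i) * (x ⬝ᵥ x) ≤ x ⬝ᵥ (M *ᵥ x) := by
  set U : Matrix V V ℝ := (hM.eigenvectorUnitary : Matrix V V ℝ) with hUdef
  have hsU : star U = Uᵀ := by
    rw [Matrix.star_eq_conjTranspose, conjTranspose_eq_transpose_of_trivial]
  have hUU : U * star U = 1 := (Matrix.mem_unitaryGroup_iff).mp hM.eigenvectorUnitary.2
  set y : V → ℝ := star U *ᵥ x with hy
  have h1 : ∀ z : V → ℝ, (star U *ᵥ x) ⬝ᵥ z = x ⬝ᵥ (U *ᵥ z) := by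
    intro z
    rw [hsU, Matrix.mulVec_transpose, dotProduct_mulVec]
  have hyy : y ⬝ᵥ y = x ⬝ᵥ x := by
    rw [hy, h1, Matrix.mulVec_mulVec, hUU, Matrix.one_mulVec]
  have hform : x ⬝ᵥ (M *ᵥ x) = ∑ i, hM.eigenvalues i * y i ^ 2 := by
    conv_lhs => rw [hM.spectral_theorem]; simp only [Unitary.conjStarAlgAut_apply, Unitary.coe_star]
    rw [← Matrix.mulVec_mulVec, ← Matrix.mulVec_mulVec, ← h1]
    simp only [Matrix.mulVec, dotProduct, Matrix.diagonal, Matrix.of_apply,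
      Function.comp, RCLike.ofReal_real_eq_id, id_eq, ite_mul, zero_mul,
      Finset.sum_ite_eq, Finset.mem_univ, if_true]
    refine Finset.sum_congr rfl (fun i _ => ?_)
    rw [hy]
    simp only [Matrix.mulVec, dotProduct]
    ring
  rw [hform, ← hyy]
  have hdd : y ⬝ᵥ y = ∑ i, y i ^ 2 := by
    simp [dotProduct, sq]
  rw [hdd, Finset.mul_sum]
  refine Finset.sum_le_sum (fun i _ => ?_)
  have h2 : (⨅ j, hM.eigenvalues j) ≤ hM.eigenvalues i :=
    ciInf_le (Finite.bddBelow_range _) i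
  nlinarith [sq_nonneg (y i)]

set_option maxHeartbeats 2000000 in
/-- If `G` is a triangle-free graph of order `n`, then `qmin G < 2n/9`. -/
theorem qmin_lt_of_triangleFree {n : ℕ} (hn : 0 < n) (G : SimpleGraph (Fin n))
    (hG : G.CliqueFree 3) :
    qmin G < 2 * n / 9 := by
  letI := Classical.decRel G.Adj
  have hne : Nonempty (Fin n) := ⟨⟨0, hn⟩⟩
  set A : Matrix (Fin n) (Fin n) ℝ := G.adjMatrix ℝ with hA
  have hQ : signlessLaplacian G = Matrix.diagonal (fun v => (G.degree v : ℝ)) + A := rfl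
  set q : ℝ := qmin G with hqdef
  -- Rayleigh bound
  have hray : ∀ x : Fin n → ℝ, q * (x ⬝ᵥ x) ≤ x ⬝ᵥ (signlessLaplacian G *ᵥ x) :=
    fun x => rayleigh_le_aux _ (signlessLaplacian_isHermitian G) x
  -- basic adjacency-matrix facts
  have htri : ∀ a b c, G.Adj a b → G.Adj a c → G.Adj b c → False := by
    intro a b c hab hac hbc
    exact hG {a,b,c} (is3Clique_triple_iff.mpr ⟨hab, hac, hbc⟩)
  have hsym : ∀ a b, A a b = A b a := by
    intro a b; simp [hA, adjMatrix_apply, G.adj_comm]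
  have hidem : ∀ a b, A a b * A a b = A a b := by
    intro a b; by_cases h : G.Adj a b <;> simp [hA, h]
  have h01 : ∀ a b, 0 ≤ A a b := by
    intro a b; by_cases h : G.Adj a b <;> simp [hA, h]
  have hle1 : ∀ a b, A a b ≤ 1 := by
    intro a b; by_cases h : G.Adj a b <;> simp [hA, h]
  have hz : ∀ a b c, G.Adj a b → A a c * A b c = 0 := by
    intro a b c hab
    by_cases h1 : G.Adj a c
    · by_cases h2 : G.Adj b c
      · exact absurd hab (fun h => htri a b c h h1 h2)
      · simp [hA, h2]
    · simp [hA, h1]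
  have hdeg : ∀ v, ∑ t, A v t = (G.degree v : ℝ) := by
    intro v
    simp [hA, adjMatrix_apply, ← neighborFinset_eq_filter, Finset.sum_ite_mem,
      Finset.sum_boole]
  -- the quadratic form of Q
  have hform : ∀ x : Fin n → ℝ,
      x ⬝ᵥ (signlessLaplacian G *ᵥ x)
        = ∑ v, (∑ t, A v t) * x v ^ 2 + ∑ v, ∑ t, A v t * (x v * x t) := by
    intro x
    rw [hQ, Matrix.add_mulVec, dotProduct_add]
    congr 1
    · simp only [Matrix.mulVec, dotProduct, Matrix.diagonal, Matrix.of_apply,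
        ite_mul, zero_mul, Finset.sum_ite_eq, Finset.mem_univ, if_true]
      exact Finset.sum_congr rfl (fun v _ => by rw [hdeg]; ring)
    · simp only [Matrix.mulVec, dotProduct, Finset.mul_sum]
      rw [Finset.sum_comm]
      exact Finset.sum_congr rfl (fun v _ =>
        Finset.sum_congr rfl (fun t _ => by rw [hsym t v]; ring))
  -- Step 0 : q ≤ degree v for every v
  have hqdeg : ∀ v, q ≤ ∑ t, A v t := by
    intro v
    have h := hray (Pi.single v 1)
    have h1 : (Pi.single v 1 : Fin n → ℝ) ⬝ᵥ (Pi.single v 1) = 1 := by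
      simp [dotProduct, Pi.single_apply]
    have h2 : (Pi.single v 1 : Fin n → ℝ) ⬝ᵥ (signlessLaplacian G *ᵥ Pi.single v 1)
        = ∑ t, A v t := by
      rw [hform]
      have e1 : ∑ w, (∑ t, A w t) * (Pi.single v 1 : Fin n → ℝ) w ^ 2 = ∑ t, A v t := by
        rw [Finset.sum_eq_single v]
        · simp
        · intro b _ hb; simp [Pi.single_apply, hb]
        · simp
      have e2 : ∑ w, ∑ t, A w t * ((Pi.single v 1 : Fin n → ℝ) w * (Pi.single v 1 : Fin n → ℝ) t) = 0 := by
        refine Finset.sum_eq_zero (fun w _ => Finset.sum_eq_zero (fun t _ => ?_))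
        by_cases hw : w = v
        · by_cases ht : t = v
          · subst hw; subst ht; simp [hA]
          · simp [Pi.single_apply, ht]
        · simp [Pi.single_apply, hw]
      rw [e1, e2, add_zero]
    rw [h1, h2, mul_one] at h
    exact h
  by_contra hcon
  push_neg at hcon
  have hnR : (0:ℝ) < n := by exact_mod_cast hn
  have hq9 : 2 * (n:ℝ) / 9 ≤ q := hcon
  have hqpos : 0 < q := lt_of_lt_of_le (by positivity) hq9
  -- u : vertex of maximum degree
  obtain ⟨u, -, hmax⟩ := Finset.exists_max_image Finset.univ (fun v => G.degree v)
    ⟨Classical.arbitrary _, Finset.mem_univ _⟩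
  have hmaxR : ∀ t, ∑ s, A t s ≤ ∑ s, A u s := by
    intro t; rw [hdeg, hdeg]; exact_mod_cast hmax t (Finset.mem_univ t)
  set Δ : ℝ := ∑ s, A u s with hΔ
  have hΔq : q ≤ Δ := hqdeg u
  have hΔpos : 0 < Δ := lt_of_lt_of_le hqpos hΔq
  -- e t = # common neighbors of u and t
  set e : Fin n → ℝ := fun t => ∑ a, A u a * A a t with he
  -- Rayleigh with x = 1_{N(u)} - 1_{N(w)} for a neighbor w of u
  have hkey : ∀ w, G.Adj u w →
      q * (Δ + ∑ s, A w s) ≤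
        (∑ v, A u v * (∑ t, A v t)) + (∑ v, A w v * (∑ t, A v t))
          - 2 * ∑ v, ∑ t, A u v * (A v t * A w t) := by
    intro w huw
    set x : Fin n → ℝ := fun v => A u v - A w v with hx
    have hnorm : x ⬝ᵥ x = Δ + ∑ s, A w s := by
      simp only [dotProduct, hx]
      rw [hΔ, ← Finset.sum_add_distrib]
      refine Finset.sum_congr rfl (fun v _ => ?_)
      linear_combination hidem u v + hidem w v - 2 * hz u w v huw
    have hquad : x ⬝ᵥ (signlessLaplacian G *ᵥ x)
        = (∑ v, A u v * (∑ t, A v t)) + (∑ v, A w v * (∑ t, A v t))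
          - 2 * ∑ v, ∑ t, A u v * (A v t * A w t) := by
      rw [hform]
      -- diagonal part
      have hdiag : ∑ v, (∑ t, A v t) * x v ^ 2
          = (∑ v, A u v * (∑ t, A v t)) + (∑ v, A w v * (∑ t, A v t)) := by
        rw [← Finset.sum_add_distrib]
        refine Finset.sum_congr rfl (fun v _ => ?_)
        simp only [hx]
        linear_combination (∑ t, A v t) * (hidem u v + hidem w v - 2 * hz u w v huw)
      -- adjacency part
      have hzz : ∀ p v t, A v t * (A p v * A p t) = 0 := by
        intro p v t
        by_cases hvt : G.Adj v t
        · rw [hsym p v, hsym p t]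
          linear_combination A v t * hz v t p hvt
        · simp [hA, hvt]
      have hswap : ∑ v, ∑ t, A v t * (A w v * A u t)
          = ∑ v, ∑ t, A v t * (A u v * A w t) := by
        rw [Finset.sum_comm]
        refine Finset.sum_congr rfl (fun v _ => Finset.sum_congr rfl (fun t _ => ?_))
        rw [hsym v t]; ring
      have hadj : ∑ v, ∑ t, A v t * (x v * x t)
          = - 2 * ∑ v, ∑ t, A u v * (A v t * A w t) := by
        have step : ∀ v t, A v t * (x v * x t)
            = - A v t * (A u v * A w t) - A v t * (A w v * A u t) := by
          intro v t
          simp only [hx]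
          linear_combination hzz u v t + hzz w v t
        calc ∑ v, ∑ t, A v t * (x v * x t)
            = ∑ v, ∑ t, (- A v t * (A u v * A w t) - A v t * (A w v * A u t)) := by
              exact Finset.sum_congr rfl (fun v _ => Finset.sum_congr rfl
                (fun t _ => step v t))
          _ = - (∑ v, ∑ t, A v t * (A u v * A w t)) - ∑ v, ∑ t, A v t * (A w v * A u t) := by
              rw [← Finset.sum_neg_distrib, ← Finset.sum_sub_distrib]
              refine Finset.sum_congr rfl (fun v _ => ?_)
              rw [← Finset.sum_neg_distrib, ← Finset.sum_sub_distrib]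
              exact Finset.sum_congr rfl (fun t _ => by ring)
          _ = - 2 * ∑ v, ∑ t, A u v * (A v t * A w t) := by
              rw [hswap]
              have hre : ∑ v, ∑ t, A v t * (A u v * A w t)
                  = ∑ v, ∑ t, A u v * (A v t * A w t) :=
                Finset.sum_congr rfl (fun v _ => Finset.sum_congr rfl (fun t _ => by ring))
              rw [hre]; ring
      rw [hdiag, hadj]; ring
    have := hray x
    rw [hnorm, hquad] at this
    exact this
  -- abbreviations
  have hΔcast : (G.degree u : ℝ) = Δ := (hdeg u).symm
  -- averaging identities
  have hSu : ∑ v, A u v * (∑ t, A v t) = ∑ t, e t := by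
    simp only [Finset.mul_sum]
    rw [Finset.sum_comm]
  have hSw : ∑ w, A u w * (∑ v, A w v * (∑ t, A v t)) = ∑ v, e v * (∑ t, A v t) := by
    simp only [Finset.mul_sum]
    rw [Finset.sum_comm]
    refine Finset.sum_congr rfl (fun v _ => ?_)
    rw [he]
    simp only [Finset.sum_mul]
    rw [Finset.sum_comm]
    exact Finset.sum_congr rfl (fun w _ => Finset.sum_congr rfl (fun t _ => by ring))
  have hP : ∑ w, A u w * (∑ v, ∑ t, A u v * (A v t * A w t)) = ∑ t, e t * e t := by
    simp only [Finset.mul_sum]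
    rw [Finset.sum_comm]
    rw [show (∑ v, ∑ w, ∑ t, A u w * (A u v * (A v t * A w t)))
        = ∑ v, ∑ t, ∑ w, A u w * (A u v * (A v t * A w t)) from
      Finset.sum_congr rfl (fun v _ => Finset.sum_comm)]
    rw [Finset.sum_comm]
    refine Finset.sum_congr rfl (fun t _ => ?_)
    rw [he]
    simp only [Finset.sum_mul, Finset.mul_sum]
    exact Finset.sum_congr rfl (fun a _ => Finset.sum_congr rfl (fun v _ => by ring))
  have t1 : ∑ w, A u w * (∑ v, A u v * (∑ t, A v t)) = Δ * (∑ t, e t) := by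
    rw [← Finset.sum_mul, ← hΔ, hSu]
  have htotal : ∑ w, A u w * ((∑ v, A u v * (∑ t, A v t)) + (∑ v, A w v * (∑ t, A v t))
        - 2 * ∑ v, ∑ t, A u v * (A v t * A w t))
      = ∑ t, e t * (Δ + (∑ s, A t s) - 2 * e t) := by
    calc ∑ w, A u w * ((∑ v, A u v * (∑ t, A v t)) + (∑ v, A w v * (∑ t, A v t))
          - 2 * ∑ v, ∑ t, A u v * (A v t * A w t))
        = ∑ w, (A u w * (∑ v, A u v * (∑ t, A v t)) + A u w * (∑ v, A w v * (∑ t, A v t))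
            - 2 * (A u w * (∑ v, ∑ t, A u v * (A v t * A w t)))) :=
          Finset.sum_congr rfl (fun w _ => by ring)
      _ = (∑ w, A u w * (∑ v, A u v * (∑ t, A v t)))
            + (∑ w, A u w * (∑ v, A w v * (∑ t, A v t)))
            - 2 * ∑ w, A u w * (∑ v, ∑ t, A u v * (A v t * A w t)) := by
          simp only [Finset.sum_sub_distrib, Finset.sum_add_distrib, ← Finset.mul_sum]
      _ = Δ * (∑ t, e t) + (∑ v, e v * (∑ t, A v t)) - 2 * ∑ t, e t * e t := by
          rw [t1, hSw, hP]
      _ = ∑ t, e t * (Δ + (∑ s, A t s) - 2 * e t) := by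
          rw [show (∑ t, e t * (Δ + (∑ s, A t s) - 2 * e t))
              = ∑ t, (Δ * e t + e t * (∑ s, A t s) - 2 * (e t * e t)) from
            Finset.sum_congr rfl (fun t _ => by ring)]
          simp only [Finset.sum_sub_distrib, Finset.sum_add_distrib, ← Finset.mul_sum]
  -- per-term bound
  have hbound : ∑ t, e t * (Δ + (∑ s, A t s) - 2 * e t) ≤ ∑ t, (1 - A u t) * (Δ^2 / 2) := by
    refine Finset.sum_le_sum (fun t _ => ?_)
    by_cases hut : G.Adj u t
    · have he0 : e t = 0 := by
        rw [he]
        exact Finset.sum_eq_zero (fun a _ => by rw [hsym a t]; exact hz u t a hut)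
      rw [he0]
      simp [hA, hut]
    · have hAut : A u t = 0 := by simp [hA, hut]
      by_cases htu : t = u
      · subst htu
        have heu : e t = Δ := by
          rw [he, hΔ]
          exact Finset.sum_congr rfl (fun a _ => by rw [hsym a t]; exact hidem t a)
        rw [heu, hAut, ← hΔ]
        nlinarith [sq_nonneg Δ]
      · have he0 : 0 ≤ e t := by
          rw [he]
          exact Finset.sum_nonneg (fun a _ => mul_nonneg (h01 u a) (h01 a t))
        have hDt : ∑ s, A t s ≤ Δ := hmaxR t
        rw [hAut]
        nlinarith [sq_nonneg (Δ - 2 * e t), mul_nonneg he0 (sub_nonneg.mpr hDt)]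
  have hrhs : ∑ t, (1 - A u t) * (Δ^2 / 2) = ((n : ℝ) - Δ) * (Δ^2 / 2) := by
    rw [← Finset.sum_mul, Finset.sum_sub_distrib, ← hΔ]
    simp
  -- move to a sum over the neighborhood of u
  have hfilter : ∀ F : Fin n → ℝ, ∑ w, A u w * F w = ∑ w ∈ G.neighborFinset u, F w := by
    intro F
    rw [neighborFinset_eq_filter, Finset.sum_filter]
    exact Finset.sum_congr rfl (fun w _ => by by_cases h : G.Adj u w <;> simp [hA, h])
  have hdegu_pos : 0 < G.degree u := by
    have h : (0:ℝ) < (G.degree u : ℝ) := by rw [hΔcast]; exact hΔpos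
    exact_mod_cast h
  have hNFne : (G.neighborFinset u).Nonempty := by
    rw [← Finset.card_pos, card_neighborFinset_eq_degree]
    exact hdegu_pos
  -- choose a good neighbor w
  have hsum_le : ∑ w ∈ G.neighborFinset u,
      ((∑ v, A u v * (∑ t, A v t)) + (∑ v, A w v * (∑ t, A v t))
        - 2 * ∑ v, ∑ t, A u v * (A v t * A w t))
      ≤ ∑ w ∈ G.neighborFinset u, (((n : ℝ) - Δ) * Δ / 2) := by
    rw [← hfilter, Finset.sum_const, nsmul_eq_mul, card_neighborFinset_eq_degree, hΔcast,
      htotal]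
    calc ∑ t, e t * (Δ + (∑ s, A t s) - 2 * e t)
        ≤ ∑ t, (1 - A u t) * (Δ^2 / 2) := hbound
      _ = ((n : ℝ) - Δ) * (Δ^2 / 2) := hrhs
      _ = Δ * (((n:ℝ) - Δ) * Δ / 2) := by ring
  obtain ⟨w, hwNF, hNum⟩ := Finset.exists_le_of_sum_le hNFne hsum_le
  have huw : G.Adj u w := (mem_neighborFinset G u w).mp hwNF
  have hkw := hkey w huw
  have hDw : q ≤ ∑ s, A w s := hqdeg w
  -- final contradiction
  have hfin : q * (Δ + ∑ s, A w s) ≤ ((n:ℝ) - Δ) * Δ / 2 := le_trans hkw hNum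
  nlinarith [sq_nonneg (18 * Δ - 5 * (n:ℝ)), mul_pos hnR hnR,
    mul_nonneg (by linarith : (0:ℝ) ≤ q - 2 * (n:ℝ) / 9) (by linarith : (0:ℝ) ≤ Δ),
    mul_nonneg (le_of_lt hqpos) (by linarith : (0:ℝ) ≤ (∑ s, A w s) - 2 * (n:ℝ) / 9),
    mul_nonneg (by linarith : (0:ℝ) ≤ q - 2 * (n:ℝ) / 9) (le_of_lt hnR)]
end

section
/- If G is a K_4-free graph of order n, then the smallest signless Laplacian eigenvalue satisfies q_min(G) ≤ 4n/9. -/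
open Matrix Finset

lemma rayleigh_min {n : ℕ} (A : Matrix (Fin n) (Fin n) ℝ) (hA : A.IsHermitian)
    (x : EuclideanSpace ℝ (Fin n)) (hx : x ≠ 0) :
    (⨅ i, hA.eigenvalues i) * (∑ i, x i ^ 2) ≤ ∑ i, x i * (A *ᵥ ⇑x) i := by
  have hn : Nonempty (Fin n) := by
    by_contra h
    exact hx (by ext i; exact absurd ⟨i⟩ h)
  set b := hA.eigenvectorBasis with hb
  set c : Fin n → ℝ := fun i => b.repr x i with hc
  have hinner : ∀ j, ∑ i, (b j) i * x i = c j := by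
    intro j
    have := b.repr_apply_apply x j
    rw [PiLp.inner_apply] at this
    rw [hc]; simpa [RCLike.inner_apply, mul_comm] using this.symm
  have hx_expand : ∀ i, x i = ∑ j, c j * (b j) i := by
    intro i
    have h0 := congrArg (fun (v : EuclideanSpace ℝ (Fin n)) => (WithLp.linearEquiv 2 ℝ (Fin n → ℝ)) v i) (b.sum_repr x)
    simp only [map_sum, _root_.map_smul, Finset.sum_apply, Pi.smul_apply, smul_eq_mul] at h0
    exact h0.symm
  have hmulvec : ∀ j i, (A *ᵥ ⇑(b j)) i = hA.eigenvalues j * (b j) i := by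
    intro j i
    have := congrFun (hA.mulVec_eigenvectorBasis j) i
    simpa using this
  have hAx2 : ∀ i, (A *ᵥ ⇑x) i = ∑ j, c j * (hA.eigenvalues j * (b j) i) := by
    intro i
    rw [mulVec]
    show ∑ k, A i k * x k = _
    calc ∑ k, A i k * x k = ∑ k, A i k * ∑ j, c j * (b j) k := by
          exact Finset.sum_congr rfl fun k _ => by rw [← hx_expand k]
    _ = ∑ k, ∑ j, c j * (A i k * (b j) k) := by
          exact Finset.sum_congr rfl fun k _ => by rw [Finset.mul_sum]; exact Finset.sum_congr rfl fun j _ => by ring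
    _ = ∑ j, ∑ k, c j * (A i k * (b j) k) := Finset.sum_comm
    _ = ∑ j, c j * (hA.eigenvalues j * (b j) i) := by
          refine Finset.sum_congr rfl fun j _ => ?_
          rw [← Finset.mul_sum]
          congr 1
          have : ∑ k, A i k * (b j) k = (A *ᵥ ⇑(b j)) i := by rw [mulVec]; rfl
          rw [this, hmulvec j i]
  have hform : ∑ i, x i * (A *ᵥ ⇑x) i = ∑ j, hA.eigenvalues j * c j ^ 2 := by
    calc ∑ i, x i * (A *ᵥ ⇑x) i = ∑ i, ∑ j, c j * hA.eigenvalues j * ((b j) i * x i) := by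
          refine Finset.sum_congr rfl fun i _ => ?_
          rw [hAx2 i, Finset.mul_sum]
          exact Finset.sum_congr rfl fun j _ => by ring
    _ = ∑ j, ∑ i, c j * hA.eigenvalues j * ((b j) i * x i) := Finset.sum_comm
    _ = ∑ j, hA.eigenvalues j * c j ^ 2 := by
          refine Finset.sum_congr rfl fun j _ => ?_
          rw [← Finset.mul_sum, hinner j]; ring
  have hnorm : ∑ i, x i ^ 2 = ∑ j, c j ^ 2 := by
    calc ∑ i, x i ^ 2 = ∑ i, ∑ j, c j * ((b j) i * x i) := by
          refine Finset.sum_congr rfl fun i _ => ?_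
          rw [sq]
          nth_rewrite 1 [hx_expand i]
          rw [Finset.sum_mul]
          exact Finset.sum_congr rfl fun j _ => by ring
    _ = ∑ j, ∑ i, c j * ((b j) i * x i) := Finset.sum_comm
    _ = ∑ j, c j ^ 2 := by
          refine Finset.sum_congr rfl fun j _ => ?_
          rw [← Finset.mul_sum, hinner j]; ring
  rw [hform, hnorm, Finset.mul_sum]
  apply Finset.sum_le_sum
  intro j _
  have hle : (⨅ i, hA.eigenvalues i) ≤ hA.eigenvalues j :=
    ciInf_le (Finite.bddBelow_range _) j
  nlinarith [sq_nonneg (c j)]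


section Abstract
variable {n : ℕ} (a : Fin n → Fin n → ℝ)

/-- degree -/
noncomputable def dg (v : Fin n) : ℝ := ∑ w, a v w
/-- codegree -/
noncomputable def cdg (v w : Fin n) : ℝ := ∑ u, a v u * a w u
/-- sum of degrees over the neighborhood -/
noncomputable def sg (v : Fin n) : ℝ := ∑ w, a v w * dg a w
/-- ordered pairs of adjacent vertices in the neighborhood -/
noncomputable def pg (v : Fin n) : ℝ := ∑ w, a v w * cdg a v w

variable (hsym : ∀ v w, a w v = a v w)
variable (h01 : ∀ v w, a v w * a v w = a v w)
variable (hdiag : ∀ v, a v v = 0)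

section basic
include h01
lemma a_nonneg : ∀ v w, 0 ≤ a v w := fun v w => (h01 v w) ▸ mul_self_nonneg _
lemma dg_nonneg (v : Fin n) : 0 ≤ dg a v := Finset.sum_nonneg fun w _ => a_nonneg a h01 v w
lemma cdg_nonneg (v w : Fin n) : 0 ≤ cdg a v w :=
  Finset.sum_nonneg fun u _ => mul_nonneg (a_nonneg a h01 v u) (a_nonneg a h01 w u)
lemma pg_nonneg (v : Fin n) : 0 ≤ pg a v :=
  Finset.sum_nonneg fun w _ => mul_nonneg (a_nonneg a h01 v w) (cdg_nonneg a h01 v w)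
/-- positive degree means degree at least one -/
lemma dg_ge_one (v : Fin n) (h : 0 < dg a v) : 1 ≤ dg a v := by
  by_contra hlt
  push_neg at hlt
  have : ∀ w ∈ univ, a v w = 0 := by
    intro w _
    have hcases : a v w = 0 ∨ a v w = 1 := by
      have h := h01 v w
      have : a v w * (a v w - 1) = 0 := by ring_nf; linarith [h]
      rcases mul_eq_zero.mp this with h0 | h1
      · exact Or.inl h0
      · exact Or.inr (by linarith)
    rcases hcases with h0 | h1
    · exact h0
    · exfalso
      have : (1 : ℝ) ≤ dg a v :=
        h1 ▸ Finset.single_le_sum (fun u _ => a_nonneg a h01 v u) (mem_univ w)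
      linarith
  have : dg a v = 0 := Finset.sum_eq_zero this
  simp [this] at h
end basic

end Abstract

section tools
variable {n : ℕ} (a : Fin n → Fin n → ℝ) (q : ℝ)
variable (hsym : ∀ v w, a w v = a v w)
variable (h01 : ∀ v w, a v w * a v w = a v w)
variable (hdiag : ∀ v, a v v = 0)
variable (hray : ∀ x : Fin n → ℝ, x ≠ 0 →
  q * (∑ v, x v ^ 2) ≤ (∑ v, dg a v * x v ^ 2) + ∑ v, ∑ w, a v w * (x v * x w))

include hray hdiag in
/-- Tool A : `q ≤ deg v` -/
lemma toolA (v : Fin n) : q ≤ dg a v := by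
  have hx : (fun w => if w = v then (1:ℝ) else 0) ≠ 0 := by
    intro h
    have := congrFun h v
    simp at this
  have h := hray _ hx
  have e1 : ∑ w, (if w = v then (1:ℝ) else 0) ^ 2 = 1 := by
    simp [ite_pow]
  have e2 : ∑ w, dg a w * (if w = v then (1:ℝ) else 0) ^ 2 = dg a v := by
    simp [ite_pow, mul_ite]
  have e3 : ∑ w, ∑ u, a w u * ((if w = v then (1:ℝ) else 0) * (if u = v then (1:ℝ) else 0))
      = a v v := by
    rw [Finset.sum_eq_single v]
    · rw [Finset.sum_eq_single v]
      · simp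
      · intro u _ hu; simp [hu]
      · simp
    · intro w _ hw
      apply Finset.sum_eq_zero
      intro u _
      simp [hw]
    · simp
  rw [e1, e2, e3, hdiag v] at h
  linarith
end tools

section toolB
variable {n : ℕ} (a : Fin n → Fin n → ℝ) (q : ℝ)

lemma toolB
    (hsym : ∀ v w, a w v = a v w)
    (h01 : ∀ v w, a v w * a v w = a v w)
    (hdiag : ∀ v, a v v = 0)
    (hray : ∀ x : Fin n → ℝ, x ≠ 0 →
      q * (∑ v, x v ^ 2) ≤ (∑ v, dg a v * x v ^ 2) + ∑ v, ∑ w, a v w * (x v * x w))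
    (x₀ : Fin n) :
    q * n ≤ 2 * (∑ v, dg a v) - 4 * sg a x₀ + 4 * pg a x₀ := by
  set y : Fin n → ℝ := fun v => 1 - 2 * a x₀ v with hy
  have hysq : ∀ v, y v ^ 2 = 1 := by
    intro v
    have := h01 x₀ v
    simp only [hy]
    nlinarith [this]
  have hx : y ≠ 0 := by
    intro h
    have := congrFun h x₀
    simp only [hy, hdiag x₀, Pi.zero_apply] at this
    norm_num at this
  have h := hray y hx
  have e1 : ∑ v, y v ^ 2 = (n : ℝ) := by simp [hysq]
  have e2 : ∑ v, dg a v * y v ^ 2 = ∑ v, dg a v := by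
    refine Finset.sum_congr rfl fun v _ => by rw [hysq v, mul_one]
  have s2 : ∑ v, ∑ w, a v w * a x₀ v = sg a x₀ := by
    rw [sg]
    refine Finset.sum_congr rfl fun v _ => ?_
    rw [dg, Finset.mul_sum]
    exact Finset.sum_congr rfl fun w _ => by ring
  have s3 : ∑ v, ∑ w, a v w * a x₀ w = sg a x₀ := by
    rw [Finset.sum_comm, ← s2]
    exact Finset.sum_congr rfl fun w _ => Finset.sum_congr rfl fun v _ => by rw [hsym v w]
  have s4 : ∑ v, ∑ w, a v w * (a x₀ v * a x₀ w) = pg a x₀ := by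
    rw [pg]
    refine Finset.sum_congr rfl fun v _ => ?_
    rw [cdg, Finset.mul_sum]
    exact Finset.sum_congr rfl fun w _ => by ring
  have e3 : ∑ v, ∑ w, a v w * (y v * y w)
      = (∑ v, dg a v) - 4 * sg a x₀ + 4 * pg a x₀ := by
    have expand : ∀ v, ∑ w, a v w * (y v * y w) =
        (∑ w, a v w) - 2 * (∑ w, a v w * a x₀ v) - 2 * (∑ w, a v w * a x₀ w)
          + 4 * (∑ w, a v w * (a x₀ v * a x₀ w)) := by
      intro v
      rw [Finset.mul_sum, Finset.mul_sum, Finset.mul_sum, ← Finset.sum_sub_distrib,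
        ← Finset.sum_sub_distrib, ← Finset.sum_add_distrib]
      refine Finset.sum_congr rfl fun w _ => ?_
      simp only [hy]; ring
    calc ∑ v, ∑ w, a v w * (y v * y w)
        = (∑ v, ∑ w, a v w) - 2 * (∑ v, ∑ w, a v w * a x₀ v)
          - 2 * (∑ v, ∑ w, a v w * a x₀ w) + 4 * (∑ v, ∑ w, a v w * (a x₀ v * a x₀ w)) := by
          rw [Finset.mul_sum, Finset.mul_sum, Finset.mul_sum, ← Finset.sum_sub_distrib,
            ← Finset.sum_sub_distrib, ← Finset.sum_add_distrib]
          exact Finset.sum_congr rfl fun v _ => expand v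
    _ = (∑ v, dg a v) - 4 * sg a x₀ + 4 * pg a x₀ := by
          rw [s2, s3, s4]
          have : ∑ v, ∑ w, a v w = ∑ v, dg a v := by
            exact Finset.sum_congr rfl fun v _ => rfl
          rw [this]; ring
  rw [e1, e2, e3] at h
  linarith
end toolB

section toolC
variable {n : ℕ} (a : Fin n → Fin n → ℝ) (q : ℝ)

lemma toolC
    (hsym : ∀ v w, a w v = a v w)
    (h01 : ∀ v w, a v w * a v w = a v w)
    (hdiag : ∀ v, a v v = 0)
    (hK4 : ∀ v y w u : Fin n, a v y * a v w * a v u * a y w * a y u * a w u = 0)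
    (hray : ∀ x : Fin n → ℝ, x ≠ 0 →
      q * (∑ v, x v ^ 2) ≤ (∑ v, dg a v * x v ^ 2) + ∑ v, ∑ w, a v w * (x v * x w))
    (v y₀ : Fin n) (hvy : a v y₀ = 1) :
    q * dg a v ≤ sg a v + pg a v - 4 * ∑ w, a v w * a y₀ w * cdg a v w := by
  set z : Fin n → ℝ := fun w => a v w * (1 - 2 * a y₀ w) with hz
  have hzsq : ∀ w, z w ^ 2 = a v w := by
    intro w
    have h1 := h01 v w
    have h2 := h01 y₀ w
    simp only [hz]
    nlinarith [h1, h2]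
  have hznz : z ≠ 0 := by
    intro h
    have := congrFun h y₀
    simp only [hz, hvy, hdiag y₀, Pi.zero_apply] at this
    norm_num at this
  have h := hray z hznz
  have e1 : ∑ w, z w ^ 2 = dg a v := by
    rw [dg]; exact Finset.sum_congr rfl fun w _ => hzsq w
  have e2 : ∑ w, dg a w * z w ^ 2 = sg a v := by
    rw [sg]; exact Finset.sum_congr rfl fun w _ => by rw [hzsq w]; ring
  -- expansion of the cross term
  have T0 : ∑ w, ∑ u, a w u * (a v w * a v u) = pg a v := by
    rw [pg]
    refine Finset.sum_congr rfl fun w _ => ?_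
    rw [cdg, Finset.mul_sum]
    exact Finset.sum_congr rfl fun u _ => by ring
  have TXdef : ∀ y : Fin n, ∑ w, a v w * a y w * cdg a v w
      = ∑ w, ∑ u, a w u * (a v w * a v u) * a y w := by
    intro y
    refine Finset.sum_congr rfl fun w _ => ?_
    rw [cdg, Finset.mul_sum]
    exact Finset.sum_congr rfl fun u _ => by ring
  have TX' : ∑ w, ∑ u, a w u * (a v w * a v u) * a y₀ u
      = ∑ w, ∑ u, a w u * (a v w * a v u) * a y₀ w := by
    rw [Finset.sum_comm]
    refine Finset.sum_congr rfl fun w _ => Finset.sum_congr rfl fun u _ => ?_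
    rw [hsym w u]; ring
  have TY : ∀ w u, a w u * (a v w * a v u) * (a y₀ w * a y₀ u) = 0 := by
    intro w u
    have := hK4 v y₀ w u
    rw [hvy, one_mul] at this
    calc a w u * (a v w * a v u) * (a y₀ w * a y₀ u)
        = a v w * a v u * a y₀ w * a y₀ u * a w u := by ring
    _ = 0 := this
  have e3 : ∑ w, ∑ u, a w u * (z w * z u)
      = pg a v - 4 * ∑ w, a v w * a y₀ w * cdg a v w := by
    have expand : ∀ w u, a w u * (z w * z u) =
        a w u * (a v w * a v u) - 2 * (a w u * (a v w * a v u) * a y₀ w)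
        - 2 * (a w u * (a v w * a v u) * a y₀ u)
        + 4 * (a w u * (a v w * a v u) * (a y₀ w * a y₀ u)) := by
      intro w u; simp only [hz]; ring
    calc ∑ w, ∑ u, a w u * (z w * z u)
        = (∑ w, ∑ u, a w u * (a v w * a v u))
          - 2 * (∑ w, ∑ u, a w u * (a v w * a v u) * a y₀ w)
          - 2 * (∑ w, ∑ u, a w u * (a v w * a v u) * a y₀ u)
          + 4 * (∑ w, ∑ u, a w u * (a v w * a v u) * (a y₀ w * a y₀ u)) := by
          rw [Finset.mul_sum, Finset.mul_sum, Finset.mul_sum, ← Finset.sum_sub_distrib,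
            ← Finset.sum_sub_distrib, ← Finset.sum_add_distrib]
          refine Finset.sum_congr rfl fun w _ => ?_
          rw [Finset.mul_sum, Finset.mul_sum, Finset.mul_sum, ← Finset.sum_sub_distrib,
            ← Finset.sum_sub_distrib, ← Finset.sum_add_distrib]
          exact Finset.sum_congr rfl fun u _ => expand w u
    _ = pg a v - 4 * ∑ w, a v w * a y₀ w * cdg a v w := by
          rw [T0, TX', ← TXdef y₀]
          have hTY : ∑ w, ∑ u, a w u * (a v w * a v u) * (a y₀ w * a y₀ u) = 0 :=
            Finset.sum_eq_zero fun w _ => Finset.sum_eq_zero fun u _ => TY w u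
          rw [hTY]; ring
  rw [e1, e2, e3] at h
  linarith

lemma toolD
    (hsym : ∀ v w, a w v = a v w)
    (h01 : ∀ v w, a v w * a v w = a v w)
    (v : Fin n) (hd : 0 < dg a v) :
    ∃ y, a v y = 1 ∧ pg a v ^ 2 ≤ dg a v ^ 2 * ∑ w, a v w * a y w * cdg a v w := by
  classical
  have hexists : ∃ y₀, a v y₀ = 1 := by
    by_contra hno
    push_neg at hno
    have : dg a v = 0 := Finset.sum_eq_zero (fun w _ => by
      have h := h01 v w
      have hcases : a v w = 0 ∨ a v w = 1 := by
        have : a v w * (a v w - 1) = 0 := by ring_nf; linarith [h]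
        rcases mul_eq_zero.mp this with h0 | h1
        · exact Or.inl h0
        · exact Or.inr (by linarith)
      rcases hcases with h0 | h1
      · exact h0
      · exact absurd h1 (hno w))
    rw [this] at hd; exact lt_irrefl 0 hd
  obtain ⟨y₀, hy₀⟩ := hexists
  set S : Finset (Fin n) := Finset.univ.filter (fun y => a v y = 1) with hS
  have hSne : S.Nonempty := ⟨y₀, by simp [hS, hy₀]⟩
  set F : Fin n → ℝ := fun y => ∑ w, a v w * a y w * cdg a v w with hF
  obtain ⟨y, hyS, hymax⟩ := S.exists_max_image F hSne
  have hay : a v y = 1 := (Finset.mem_filter.mp hyS).2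
  refine ⟨y, hay, ?_⟩
  -- R = ∑_y a v y * F y
  set R : ℝ := ∑ w, a v w * cdg a v w ^ 2 with hR
  have hRid : ∑ y', a v y' * F y' = R := by
    calc ∑ y', a v y' * F y'
        = ∑ y', ∑ w, a v w * cdg a v w * (a v y' * a y' w) := by
          refine Finset.sum_congr rfl fun y' _ => ?_
          rw [hF, Finset.mul_sum]
          exact Finset.sum_congr rfl fun w _ => by ring
    _ = ∑ w, ∑ y', a v w * cdg a v w * (a v y' * a y' w) := Finset.sum_comm
    _ = R := by
          rw [hR]
          refine Finset.sum_congr rfl fun w _ => ?_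
          have hcd : ∑ y', a v y' * a y' w = cdg a v w := by
            rw [cdg]
            exact Finset.sum_congr rfl fun y' _ => by rw [hsym y' w]
          calc ∑ y', a v w * cdg a v w * (a v y' * a y' w)
              = a v w * cdg a v w * ∑ y', a v y' * a y' w := by
                rw [Finset.mul_sum]
          _ = a v w * cdg a v w * cdg a v w := by rw [hcd]
          _ = a v w * cdg a v w ^ 2 := by ring
  have hcauchy : pg a v ^ 2 ≤ dg a v * R := by
    have hcs := Finset.sum_mul_sq_le_sq_mul_sq Finset.univ
      (fun w => a v w) (fun w => a v w * cdg a v w)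
    have l1 : ∑ w, a v w * (a v w * cdg a v w) = pg a v := by
      rw [pg]
      refine Finset.sum_congr rfl fun w _ => ?_
      calc a v w * (a v w * cdg a v w) = (a v w * a v w) * cdg a v w := by ring
      _ = a v w * cdg a v w := by rw [h01]
    have l2 : ∑ w, (a v w) ^ 2 = dg a v := by
      rw [dg]
      exact Finset.sum_congr rfl fun w _ => by rw [sq, h01]
    have l3 : ∑ w, (a v w * cdg a v w) ^ 2 = R := by
      rw [hR]
      refine Finset.sum_congr rfl fun w _ => ?_
      calc (a v w * cdg a v w) ^ 2 = (a v w * a v w) * cdg a v w ^ 2 := by ring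
      _ = a v w * cdg a v w ^ 2 := by rw [h01]
    rw [l1, l2, l3] at hcs
    exact hcs
  have hFy_nonneg : ∀ y', 0 ≤ F y' := by
    intro y'
    rw [hF]
    exact Finset.sum_nonneg fun w _ => mul_nonneg
      (mul_nonneg (a_nonneg a h01 v w) (a_nonneg a h01 y' w)) (cdg_nonneg a h01 v w)
  have hRle : R ≤ dg a v * F y := by
    rw [← hRid]
    have : ∑ y', a v y' * F y ≤ dg a v * F y := by
      rw [← Finset.sum_mul, dg]
    calc ∑ y', a v y' * F y' ≤ ∑ y', a v y' * F y := by
          refine Finset.sum_le_sum fun y' _ => ?_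
          have hcases : a v y' = 0 ∨ a v y' = 1 := by
            have h := h01 v y'
            have : a v y' * (a v y' - 1) = 0 := by ring_nf; linarith [h]
            rcases mul_eq_zero.mp this with h0 | h1
            · exact Or.inl h0
            · exact Or.inr (by linarith)
          rcases hcases with h0 | h1
          · rw [h0]; simp
          · rw [h1, one_mul, one_mul]
            exact hymax y' (by simp [hS, h1])
    _ ≤ dg a v * F y := this
  have hd0 : 0 ≤ dg a v := le_of_lt hd
  calc pg a v ^ 2 ≤ dg a v * R := hcauchy
  _ ≤ dg a v * (dg a v * F y) := by
        exact mul_le_mul_of_nonneg_left hRle hd0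
  _ = dg a v ^ 2 * F y := by ring
end toolC


set_option maxHeartbeats 1000000 in
lemma scalar_contradiction (N D P M q : ℝ) (hN : 1 ≤ N) (hq : 4 * N / 9 < q)
    (hD : N ≤ D) (hP : 0 < P) (hM : 0 ≤ M) (h3 : D ^ 2 ≤ N * P)
    (H1 : q * N * N ≤ 2 * N * D - 4 * P + 4 * M)
    (H2 : q * D ≤ P + M - 4 * (M ^ 2 / P)) : False := by
  have hN0 : (0:ℝ) < N := by linarith
  have hD0 : (0:ℝ) < D := by linarith
  have h1 : 4 * N ^ 3 / 9 < 2 * N * D - 4 * P + 4 * M := by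
    have : 4 * N ^ 3 / 9 < q * N * N := by
      have := mul_lt_mul_of_pos_right (mul_lt_mul_of_pos_right hq hN0) hN0
      calc 4 * N ^ 3 / 9 = 4 * N / 9 * N * N := by ring
      _ < q * N * N := this
    linarith
  have h2P : 4 * N / 9 * D * P < P ^ 2 + M * P - 4 * M ^ 2 := by
    have hqD : 4 * N / 9 * D < q * D := mul_lt_mul_of_pos_right hq hD0
    have h2 : 4 * N / 9 * D < P + M - 4 * (M ^ 2 / P) := lt_of_lt_of_le hqD H2
    have := mul_lt_mul_of_pos_right h2 hP
    have hMP : M ^ 2 / P * P = M ^ 2 := div_mul_cancel₀ _ (ne_of_gt hP)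
    nlinarith [this, hMP]
  obtain ⟨u, hu⟩ : ∃ u : ℝ, u = N ^ 3 / 9 - N * D / 2 := ⟨_, rfl⟩
  obtain ⟨M1, hM1def⟩ : ∃ M1 : ℝ, M1 = P + u := ⟨_, rfl⟩
  have hMM1 : M1 < M := by
    rw [hM1def, hu]
    linarith
  have step_a : P ≤ 8 * M1 := by
    have key : 7 * D ^ 2 + 8 * N ^ 4 / 9 - 4 * N ^ 2 * D ≥ 0 := by
      nlinarith [sq_nonneg (7 * D - 2 * N ^ 2)]
    have keyN : N * (8 * M1 - P) ≥ 0 := by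
      have expand : N * (8 * M1 - P) = 7 * N * P + 8 * N ^ 4 / 9 - 4 * N ^ 2 * D := by
        rw [hM1def, hu]; ring
      rw [expand]
      nlinarith [h3, key]
    nlinarith [keyN, hN0]
  have step_b : M * P - 4 * M ^ 2 ≤ M1 * P - 4 * M1 ^ 2 := by
    have f1 : (0:ℝ) ≤ M - M1 := by linarith
    have f2 : (0:ℝ) ≤ 4 * (M + M1) - P := by linarith
    nlinarith [mul_nonneg f1 f2]
  have step_c : P ^ 2 + M1 * P - 4 * M1 ^ 2 ≤ 4 * N / 9 * D * P := by
    obtain ⟨c, hc⟩ : ∃ c : ℝ, c = 7 * N ^ 3 / 9 - 55 * N * D / 18 := ⟨_, rfl⟩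
    have t1 : 0 ≤ 4 * D ^ 2 + c * N := by
      have e1 : 5184 * (4 * D ^ 2 + c * N)
          = (144 * D - 55 * N ^ 2) ^ 2 + 1007 * N ^ 4 := by
        rw [hc]; ring
      have q1 := sq_nonneg (144 * D - 55 * N ^ 2)
      have q2 : (0:ℝ) ≤ N ^ 4 := by positivity
      linarith
    have t2 : 0 ≤ 2 * D ^ 4 - 55 / 18 * N ^ 2 * D ^ 3 + 16 / 9 * N ^ 4 * D ^ 2
        - 4 / 9 * N ^ 6 * D + 4 / 81 * N ^ 8 := by
      have e2 : 162 * (2 * D ^ 4 - 55 / 18 * N ^ 2 * D ^ 3 + 16 / 9 * N ^ 4 * D ^ 2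
          - 4 / 9 * N ^ 6 * D + 4 / 81 * N ^ 8)
          = (18 * D ^ 2 - 55 / 4 * N ^ 2 * D + 1583 / 576 * N ^ 4) ^ 2
            + 4121 / 1152 * (N ^ 6 * D) + 148319 / 331776 * N ^ 8 := by
        ring
      have q1 := sq_nonneg (18 * D ^ 2 - 55 / 4 * N ^ 2 * D + 1583 / 576 * N ^ 4)
      have q2 : (0:ℝ) ≤ N ^ 6 * D := by positivity
      have q3 : (0:ℝ) ≤ N ^ 8 := by positivity
      linarith
    have hid : N ^ 2 * (2 * P ^ 2 + c * P + 4 * u ^ 2)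
        = 2 * (N * P - D ^ 2) ^ 2 + (4 * D ^ 2 + c * N) * (N * P - D ^ 2)
          + (2 * D ^ 4 - 55 / 18 * N ^ 2 * D ^ 3 + 16 / 9 * N ^ 4 * D ^ 2
            - 4 / 9 * N ^ 6 * D + 4 / 81 * N ^ 8) := by
      rw [hc, hu]; ring
    have hpos : 0 ≤ N ^ 2 * (2 * P ^ 2 + c * P + 4 * u ^ 2) := by
      rw [hid]
      have w1 := mul_nonneg t1 (by linarith [h3] : (0:ℝ) ≤ N * P - D ^ 2)
      have w2 := sq_nonneg (N * P - D ^ 2)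
      linarith
    have hexpr : 0 ≤ 2 * P ^ 2 + c * P + 4 * u ^ 2 := by
      by_contra hcon
      push_neg at hcon
      have hN2 : (0:ℝ) < N ^ 2 := by positivity
      have := mul_neg_of_pos_of_neg hN2 hcon
      linarith
    have hfinal : 4 * N / 9 * D * P - (P ^ 2 + M1 * P - 4 * M1 ^ 2)
        = 2 * P ^ 2 + c * P + 4 * u ^ 2 := by
      rw [hM1def, hc, hu]; ring
    linarith [hexpr, hfinal]
  linarith [h2P, step_b, step_c]

section assembly
variable {n : ℕ} (a : Fin n → Fin n → ℝ) (q : ℝ)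

lemma abstract_main
    (hsym : ∀ v w, a w v = a v w)
    (h01 : ∀ v w, a v w * a v w = a v w)
    (hdiag : ∀ v, a v v = 0)
    (hK4 : ∀ v y w u : Fin n, a v y * a v w * a v u * a y w * a y u * a w u = 0)
    (hray : ∀ x : Fin n → ℝ, x ≠ 0 →
      q * (∑ v, x v ^ 2) ≤ (∑ v, dg a v * x v ^ 2) + ∑ v, ∑ w, a v w * (x v * x w))
    (hn : 1 ≤ n) (hq : 4 * n / 9 < q) : False := by
  have hq0 : 0 < q := by
    have : (0:ℝ) < 4 * n / 9 := by
      have : (1:ℝ) ≤ (n:ℝ) := by exact_mod_cast hn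
      positivity
    linarith
  have hdg1 : ∀ v, 1 ≤ dg a v := by
    intro v
    exact dg_ge_one a h01 v (lt_of_lt_of_le hq0 (toolA a q hdiag hray v))
  have hD : (n:ℝ) ≤ ∑ v, dg a v := by
    calc (n:ℝ) = ∑ _v : Fin n, (1:ℝ) := by simp
    _ ≤ ∑ v, dg a v := Finset.sum_le_sum fun v _ => hdg1 v
  have hP : (n:ℝ) ≤ ∑ v, dg a v ^ 2 := by
    calc (n:ℝ) = ∑ _v : Fin n, (1:ℝ) := by simp
    _ ≤ ∑ v, dg a v ^ 2 := Finset.sum_le_sum fun v _ => by nlinarith [hdg1 v]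
  have hP0 : 0 < ∑ v, dg a v ^ 2 := by
    have : (0:ℝ) < (n:ℝ) := by exact_mod_cast hn
    linarith
  have hM0 : 0 ≤ ∑ v, pg a v := Finset.sum_nonneg fun v _ => pg_nonneg a h01 v
  have hsg_sum : ∑ v, sg a v = ∑ v, dg a v ^ 2 := by
    calc ∑ v, sg a v = ∑ v, ∑ w, a v w * dg a w := rfl
    _ = ∑ w, ∑ v, a v w * dg a w := Finset.sum_comm
    _ = ∑ w, dg a w ^ 2 := by
        refine Finset.sum_congr rfl fun w _ => ?_
        have : ∑ v, a v w * dg a w = (∑ v, a v w) * dg a w := by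
          rw [Finset.sum_mul]
        rw [this]
        have : ∑ v, a v w = dg a w := by
          rw [dg]
          exact Finset.sum_congr rfl fun v _ => (hsym v w).symm
        rw [this, sq]
  -- H1
  have H1 : q * n * n ≤ 2 * n * (∑ v, dg a v) - 4 * (∑ v, dg a v ^ 2) + 4 * (∑ v, pg a v) := by
    have hsum : ∑ _x : Fin n, (q * n) ≤
        ∑ x, (2 * (∑ v, dg a v) - 4 * sg a x + 4 * pg a x) :=
      Finset.sum_le_sum (fun x₀ _ => toolB a q hsym h01 hdiag hray x₀)
    have lhs_eq : ∑ _x : Fin n, (q * (n:ℝ)) = q * n * n := by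
      rw [Finset.sum_const, Finset.card_univ, Fintype.card_fin, nsmul_eq_mul]
      ring
    have rhs_eq : ∑ x, (2 * (∑ v, dg a v) - 4 * sg a x + 4 * pg a x)
        = 2 * n * (∑ v, dg a v) - 4 * (∑ v, dg a v ^ 2) + 4 * (∑ v, pg a v) := by
      rw [Finset.sum_add_distrib, Finset.sum_sub_distrib, Finset.sum_const,
        Finset.card_univ, Fintype.card_fin, nsmul_eq_mul, ← Finset.mul_sum, ← Finset.mul_sum,
        hsg_sum]
      ring
    rw [lhs_eq, rhs_eq] at hsum
    exact hsum
  -- per-vertex tool C with optimal y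
  have HCv : ∀ v, q * dg a v ≤ sg a v + pg a v - 4 * (pg a v ^ 2 / dg a v ^ 2) := by
    intro v
    have hdv : 0 < dg a v := lt_of_lt_of_le one_pos (hdg1 v)
    obtain ⟨y, hay, hcs⟩ := toolD a hsym h01 v hdv
    have hC := toolC a q hsym h01 hdiag hK4 hray v y hay
    have hdv2 : 0 < dg a v ^ 2 := by positivity
    have hF : pg a v ^ 2 / dg a v ^ 2 ≤ ∑ w, a v w * a y w * cdg a v w := by
      rw [div_le_iff₀ hdv2]
      calc pg a v ^ 2 ≤ dg a v ^ 2 * ∑ w, a v w * a y w * cdg a v w := hcs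
      _ = (∑ w, a v w * a y w * cdg a v w) * dg a v ^ 2 := by ring
    linarith
  -- H2
  have H2 : q * (∑ v, dg a v) ≤ (∑ v, dg a v ^ 2) + (∑ v, pg a v)
      - 4 * ((∑ v, pg a v) ^ 2 / (∑ v, dg a v ^ 2)) := by
    have hsum : ∑ v, (q * dg a v) ≤
        ∑ v, (sg a v + pg a v - 4 * (pg a v ^ 2 / dg a v ^ 2)) :=
      Finset.sum_le_sum (fun v _ => HCv v)
    have lhs_eq : ∑ v, (q * dg a v) = q * (∑ v, dg a v) := by
      rw [← Finset.mul_sum]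
    have rhs_eq : ∑ v, (sg a v + pg a v - 4 * (pg a v ^ 2 / dg a v ^ 2))
        = (∑ v, dg a v ^ 2) + (∑ v, pg a v) - 4 * ∑ v, (pg a v ^ 2 / dg a v ^ 2) := by
      rw [Finset.sum_sub_distrib, Finset.sum_add_distrib, hsg_sum, ← Finset.mul_sum]
    rw [lhs_eq, rhs_eq] at hsum
    -- Cauchy–Schwarz : M² ≤ (Σ p²/d²)·P
    have hcs2 : (∑ v, pg a v) ^ 2 ≤ (∑ v, pg a v ^ 2 / dg a v ^ 2) * (∑ v, dg a v ^ 2) := by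
      have := Finset.sum_mul_sq_le_sq_mul_sq Finset.univ
        (fun v => pg a v / dg a v) (fun v => dg a v)
      have l1 : ∑ v, (pg a v / dg a v) * dg a v = ∑ v, pg a v := by
        refine Finset.sum_congr rfl fun v _ =>
          div_mul_cancel₀ _ (ne_of_gt (lt_of_lt_of_le one_pos (hdg1 v)))
      have l2 : ∑ v, (pg a v / dg a v) ^ 2 = ∑ v, pg a v ^ 2 / dg a v ^ 2 := by
        refine Finset.sum_congr rfl fun v _ => by rw [div_pow]
      rw [l1, l2] at this
      exact this
    have hdiv : (∑ v, pg a v) ^ 2 / (∑ v, dg a v ^ 2) ≤ ∑ v, pg a v ^ 2 / dg a v ^ 2 := by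
      rw [div_le_iff₀ hP0]
      exact hcs2
    linarith
  -- cast and finish
  have hNcast : (1:ℝ) ≤ (n:ℝ) := by exact_mod_cast hn
  exact scalar_contradiction n (∑ v, dg a v) (∑ v, dg a v ^ 2) (∑ v, pg a v) q
    hNcast hq hD hP0 hM0
    (by
      have hcs3 := Finset.sum_mul_sq_le_sq_mul_sq Finset.univ
        (fun _ => (1:ℝ)) (fun v => dg a v)
      simp only [one_pow, one_mul, Finset.sum_const, Finset.card_univ, Fintype.card_fin,
        nsmul_eq_mul, mul_one] at hcs3
      exact hcs3)
    H1 H2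


open Matrix SimpleGraph Finset

/-- If `G` is a `K₄`-free graph of order `n`, then `qmin G ≤ 4n/9`. -/
theorem qmin_le_of_K4Free {n : ℕ} (G : SimpleGraph (Fin n))
    (hG : G.CliqueFree 4) :
    qmin G ≤ 4 * n / 9 := by
  rcases Nat.eq_zero_or_pos n with hn0 | hn
  · subst hn0
    have h0 : qmin G = 0 := by
      rw [qmin]
      exact Real.iInf_of_isEmpty _
    rw [h0]
    norm_num
  · by_contra hlt
    push_neg at hlt
    letI := Classical.decRel G.Adj
    set a : Fin n → Fin n → ℝ := fun v w => if G.Adj v w then 1 else 0 with ha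
    have hsym : ∀ v w, a w v = a v w := by
      intro v w
      simp only [ha]
      by_cases h : G.Adj v w
      · rw [if_pos h, if_pos h.symm]
      · rw [if_neg h, if_neg (fun h' => h h'.symm)]
    have h01 : ∀ v w, a v w * a v w = a v w := by
      intro v w
      simp only [ha]
      by_cases h : G.Adj v w <;> simp [h]
    have hdiag : ∀ v, a v v = 0 := by
      intro v
      simp only [ha]
      rw [if_neg (G.irrefl)]
    have hK4 : ∀ v y w u : Fin n, a v y * a v w * a v u * a y w * a y u * a w u = 0 := by
      intro v y w u
      by_cases h1 : G.Adj v y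
      case neg => simp [ha, if_neg h1]
      by_cases h2 : G.Adj v w
      case neg => simp [ha, if_neg h2]
      by_cases h3 : G.Adj v u
      case neg => simp [ha, if_neg h3]
      by_cases h4 : G.Adj y w
      case neg => simp [ha, if_neg h4]
      by_cases h5 : G.Adj y u
      case neg => simp [ha, if_neg h5]
      by_cases h6 : G.Adj w u
      case neg => simp [ha, if_neg h6]
      exfalso
      have hclique : G.IsNClique 4 {v, y, w, u} := by
        rw [SimpleGraph.isNClique_iff]
        constructor
        · intro x hx z hz hne
          simp only [Finset.coe_insert, Set.mem_insert_iff, Finset.coe_singleton,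
            Set.mem_singleton_iff] at hx hz
          rcases hx with rfl | rfl | rfl | rfl <;> rcases hz with rfl | rfl | rfl | rfl <;>
            first
              | exact absurd rfl hne
              | exact h1 | exact h1.symm
              | exact h2 | exact h2.symm
              | exact h3 | exact h3.symm
              | exact h4 | exact h4.symm
              | exact h5 | exact h5.symm
              | exact h6 | exact h6.symm
        · have m1 : v ∉ ({y, w, u} : Finset (Fin n)) := by
            simp only [Finset.mem_insert, Finset.mem_singleton]
            push_neg
            exact ⟨h1.ne, h2.ne, h3.ne⟩
          have m2 : y ∉ ({w, u} : Finset (Fin n)) := by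
            simp only [Finset.mem_insert, Finset.mem_singleton]
            push_neg
            exact ⟨h4.ne, h5.ne⟩
          have m3 : w ∉ ({u} : Finset (Fin n)) := by
            simp only [Finset.mem_singleton]
            exact h6.ne
          rw [Finset.card_insert_of_notMem m1, Finset.card_insert_of_notMem m2,
            Finset.card_insert_of_notMem m3, Finset.card_singleton]
      exact hG _ hclique
    have hdeg : ∀ v, (G.degree v : ℝ) = dg a v := by
      intro v
      rw [dg]
      simp only [ha]
      rw [Finset.sum_boole]
      congr 1
      rw [SimpleGraph.degree, SimpleGraph.neighborFinset_eq_filter]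
    have hray : ∀ x : Fin n → ℝ, x ≠ 0 →
        qmin G * (∑ v, x v ^ 2) ≤ (∑ v, dg a v * x v ^ 2) + ∑ v, ∑ w, a v w * (x v * x w) := by
      intro x hx
      have h := rayleigh_min (signlessLaplacian G) (signlessLaplacian_isHermitian G) (WithLp.toLp 2 x)
        (by intro h0; apply hx; simpa using congrArg WithLp.ofLp h0)
      simp only [PiLp.toLp_apply, WithLp.ofLp_toLp] at h
      have hform : ∑ i, x i * (signlessLaplacian G *ᵥ x) i
          = (∑ v, dg a v * x v ^ 2) + ∑ v, ∑ w, a v w * (x v * x w) := by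
        have hQv : ∀ i, (signlessLaplacian G *ᵥ x) i
            = (G.degree i : ℝ) * x i + ∑ w, a i w * x w := by
          intro i
          show (signlessLaplacian G *ᵥ x) i = _
          rw [signlessLaplacian, add_mulVec, Pi.add_apply, mulVec_diagonal]
          congr 1
        calc ∑ i, x i * (signlessLaplacian G *ᵥ x) i
            = ∑ i, ((G.degree i : ℝ) * x i ^ 2 + ∑ w, a i w * (x i * x w)) := by
              refine Finset.sum_congr rfl fun i _ => ?_
              rw [hQv i, mul_add, Finset.mul_sum]
              congr 1
              · ring
              · exact Finset.sum_congr rfl fun w _ => by ring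
        _ = (∑ v, dg a v * x v ^ 2) + ∑ v, ∑ w, a v w * (x v * x w) := by
              rw [Finset.sum_add_distrib]
              congr 1
              exact Finset.sum_congr rfl fun v _ => by rw [hdeg v]
      rw [← hform]
      exact h
    exact abstract_main a (qmin G) hsym h01 hdiag hK4 hray hn hlt
end assembly
end

section
/- Let r ≥ 3. If G is a K_{r+1}-free graph of order n, then the smallest signless Laplacian eigenvalue satisfies q_min(G) < (1 − 3/(3r−1))·n. -/
open Matrix SimpleGraph Finset

section Rayleigh

variable {V : Type} [Fintype V] [DecidableEq V]

lemma iInf_eigenvalues_le [Nonempty V] {A : Matrix V V ℝ} (hA : A.IsHermitian) (i : V) :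
    (⨅ j, hA.eigenvalues j) ≤ hA.eigenvalues i :=
  ciInf_le (Set.Finite.bddBelow (Set.finite_range _)) i

lemma rayleigh_lower {A : Matrix V V ℝ} (hA : A.IsHermitian) [Nonempty V] (x : V → ℝ) :
    (⨅ j, hA.eigenvalues j) * (x ⬝ᵥ x) ≤ x ⬝ᵥ A.mulVec x := by
  classical
  set U : Matrix V V ℝ := (hA.eigenvectorUnitary : Matrix V V ℝ) with hU
  have hmem : U ∈ Matrix.unitaryGroup V ℝ := hA.eigenvectorUnitary.2
  have hsU : U * star U = 1 := (Matrix.mem_unitaryGroup_iff).mp hmem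
  have hstar : star U = Uᵀ := by
    rw [Matrix.star_eq_conjTranspose, Matrix.conjTranspose_eq_transpose_of_trivial]
  set y : V → ℝ := (star U).mulVec x with hy
  have hxx : x ⬝ᵥ x = y ⬝ᵥ y := by
    rw [hy, dotProduct_mulVec, ← Matrix.mulVec_transpose]
    rw [show (star U)ᵀ = U by rw [hstar, Matrix.transpose_transpose]]
    rw [Matrix.mulVec_mulVec, hsU, Matrix.one_mulVec]
  have hdiag : x ⬝ᵥ A.mulVec x = ∑ i, hA.eigenvalues i * (y i)^2 := by
    conv_lhs => rw [hA.spectral_theorem, Unitary.conjStarAlgAut_apply]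
    rw [← Matrix.mulVec_mulVec, ← Matrix.mulVec_mulVec, dotProduct_mulVec,
      ← Matrix.mulVec_transpose]
    rw [show Uᵀ = star U from hstar.symm, ← hy]
    have : (Matrix.diagonal (RCLike.ofReal ∘ hA.eigenvalues) : Matrix V V ℝ) =
        Matrix.diagonal hA.eigenvalues := by
      congr 1
    rw [this]
    simp [dotProduct, Matrix.mulVec_diagonal]
    ring_nf
    exact Finset.sum_congr rfl fun i _ => by ring
  rw [hxx, hdiag]
  have : (⨅ j, hA.eigenvalues j) * (y ⬝ᵥ y) = ∑ i, (⨅ j, hA.eigenvalues j) * (y i)^2 := by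
    rw [dotProduct]
    rw [Finset.mul_sum]
    exact Finset.sum_congr rfl fun i _ => by ring
  rw [this]
  exact Finset.sum_le_sum fun i _ =>
    mul_le_mul_of_nonneg_right (iInf_eigenvalues_le hA i) (sq_nonneg _)

lemma exists_min_eigenvector {A : Matrix V V ℝ} (hA : A.IsHermitian) [Nonempty V] :
    ∃ y : V → ℝ, y ≠ 0 ∧ A.mulVec y = (⨅ j, hA.eigenvalues j) • y := by
  classical
  obtain ⟨i0, hi0⟩ := Finite.exists_min hA.eigenvalues
  have hmin : (⨅ j, hA.eigenvalues j) = hA.eigenvalues i0 :=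
    le_antisymm (iInf_eigenvalues_le hA i0) (le_ciInf hi0)
  refine ⟨⇑(hA.eigenvectorBasis i0), ?_, ?_⟩
  · have := hA.eigenvectorBasis.orthonormal.ne_zero i0
    intro h
    apply this
    ext j
    exact congrFun h j
  · rw [hmin]
    exact hA.mulVec_eigenvectorBasis i0

end Rayleigh

section Quad
variable {V : Type} [Fintype V] [DecidableEq V] (G : SimpleGraph V)

lemma quadform (x : V → ℝ) :
    letI := Classical.decRel G.Adj
    x ⬝ᵥ (signlessLaplacian G).mulVec x =
      ∑ v, (G.degree v : ℝ) * x v ^ 2 +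
      ∑ v, ∑ w, (if G.Adj v w then x v * x w else 0) := by
  letI := Classical.decRel G.Adj
  unfold signlessLaplacian
  rw [Matrix.add_mulVec, dotProduct_add]
  congr 1
  · simp [dotProduct, Matrix.mulVec_diagonal]
    exact Finset.sum_congr rfl fun v _ => by ring
  · exact G.dotProduct_mulVec_adjMatrix x x

set_option linter.unusedSectionVars false in
lemma dotProduct_self_pos {x : V → ℝ} (hx : x ≠ 0) : 0 < x ⬝ᵥ x := by
  have h1 : x ⬝ᵥ x = ∑ v, x v ^ 2 := by
    rw [dotProduct]; exact Finset.sum_congr rfl fun v _ => (sq (x v)).symm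
  rw [h1]
  obtain ⟨v, hv⟩ : ∃ v, x v ≠ 0 := by
    by_contra h; push_neg at h; exact hx (funext h)
  exact Finset.sum_pos' (fun i _ => sq_nonneg _) ⟨v, Finset.mem_univ v, by positivity⟩

lemma qmin_le_of_le {G : SimpleGraph V} [Nonempty V] {x : V → ℝ} (hx : x ≠ 0) {c : ℝ}
    (h : x ⬝ᵥ (signlessLaplacian G).mulVec x ≤ c * (x ⬝ᵥ x)) : qmin G ≤ c := by
  have hR := rayleigh_lower (signlessLaplacian_isHermitian G) x
  have hpos := dotProduct_self_pos hx
  have : qmin G * (x ⬝ᵥ x) ≤ c * (x ⬝ᵥ x) := le_trans hR h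
  exact le_of_mul_le_mul_right this hpos

lemma qmin_lt_of_lt {G : SimpleGraph V} [Nonempty V] {x : V → ℝ} (hx : x ≠ 0) {c : ℝ}
    (h : x ⬝ᵥ (signlessLaplacian G).mulVec x < c * (x ⬝ᵥ x)) : qmin G < c := by
  have hR := rayleigh_lower (signlessLaplacian_isHermitian G) x
  have hpos := dotProduct_self_pos hx
  have : qmin G * (x ⬝ᵥ x) < c * (x ⬝ᵥ x) := lt_of_le_of_lt hR h
  exact lt_of_mul_lt_mul_right this (le_of_lt hpos)

lemma qmin_le_degree (G : SimpleGraph V) [Nonempty V] (v : V) :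
    letI := Classical.decRel G.Adj
    qmin G ≤ (G.degree v : ℝ) := by
  letI := Classical.decRel G.Adj
  apply qmin_le_of_le (x := Pi.single v 1)
  · intro h
    have := congrFun h v
    simp at this
  · rw [quadform]
    have h1 : (Pi.single v 1 : V → ℝ) ⬝ᵥ Pi.single v 1 = 1 := by
      simp [dotProduct, Pi.single_apply]
    rw [h1, mul_one]
    have h2 : ∑ w, (G.degree w : ℝ) * (Pi.single v 1 : V → ℝ) w ^ 2 = G.degree v := by
      rw [Finset.sum_eq_single v]
      · simp
      · intro w _ hw; simp [Pi.single_apply, hw]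
      · intro h; exact absurd (Finset.mem_univ v) h
    have h3 : ∑ a, ∑ w, (if G.Adj a w then (Pi.single v 1 : V → ℝ) a *
        (Pi.single v 1 : V → ℝ) w else 0) = 0 := by
      apply Finset.sum_eq_zero; intro a _
      apply Finset.sum_eq_zero; intro w _
      by_cases h : G.Adj a w
      · simp only [h, if_true, Pi.single_apply]
        rcases eq_or_ne v a with rfl | ha
        · rcases eq_or_ne v w with rfl | hw
          · exact absurd h (G.irrefl)
          · simp [hw, Ne.symm hw]
        · simp [Ne.symm ha]
      · simp [h]
    rw [h2, h3, add_zero]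

end Quad


section Walks
variable {V : Type} {G : SimpleGraph V}

lemma exists_walk_getVert :
    ∀ {u w : V} (p : G.Walk u w) (i j : ℕ), i ≤ j → j ≤ p.length →
    ∃ q : G.Walk (p.getVert i) (p.getVert j), q.length = j - i := by
  intro u w p
  induction p with
  | nil =>
    intro i j hij hj
    simp only [SimpleGraph.Walk.length_nil, Nat.le_zero] at hj
    subst hj
    simp only [Nat.le_zero] at hij
    subst hij
    exact ⟨SimpleGraph.Walk.nil, rfl⟩
  | @cons a b c h q ih =>
    intro i j hij hj
    cases i with
    | zero =>
      cases j with
      | zero => exact ⟨SimpleGraph.Walk.nil, rfl⟩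
      | succ j' =>
        rw [SimpleGraph.Walk.length_cons] at hj
        obtain ⟨q', hq'⟩ := ih 0 j' (Nat.zero_le _) (Nat.le_of_succ_le_succ hj)
        refine ⟨SimpleGraph.Walk.cons h (q'.copy (q.getVert_zero) rfl), ?_⟩
        exact (congrArg Nat.succ ((SimpleGraph.Walk.length_copy _ _ _).trans hq')).trans (by omega)
    | succ i' =>
      cases j with
      | zero => omega
      | succ j' =>
        rw [SimpleGraph.Walk.length_cons] at hj
        obtain ⟨q', hq'⟩ := ih i' j' (Nat.le_of_succ_le_succ hij) (Nat.le_of_succ_le_succ hj)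
        exact ⟨q', hq'.trans (by omega)⟩

/-- a closed walk at `u` given adjacency of `u` to two walk vertices. -/
lemma exists_closed_walk_of_adj {u v0 : V} (p : G.Walk v0 v0) {a b : ℕ} (hab : a ≤ b)
    (hb : b ≤ p.length) (ha' : G.Adj u (p.getVert a)) (hb' : G.Adj u (p.getVert b)) :
    ∃ q : G.Walk u u, q.length = (b - a) + 2 := by
  obtain ⟨q, hq⟩ := exists_walk_getVert p a b hab hb
  refine ⟨SimpleGraph.Walk.cons ha' (q.append (SimpleGraph.Walk.cons hb'.symm
    SimpleGraph.Walk.nil)), ?_⟩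
  simp only [SimpleGraph.Walk.length_cons, SimpleGraph.Walk.length_append,
    SimpleGraph.Walk.length_nil, hq]

/-- "rotated"" walk: from getVert b around the end to getVert a. -/
lemma exists_rot_walk (p : G.Walk v0 v0) {a b : ℕ} (hab : a ≤ b) (hb : b ≤ p.length) :
    ∃ q : G.Walk (p.getVert b) (p.getVert a), q.length = p.length - b + a := by
  obtain ⟨q1, hq1⟩ := exists_walk_getVert p b p.length hb le_rfl
  obtain ⟨q2, hq2⟩ := exists_walk_getVert p 0 a (Nat.zero_le _) (le_trans hab hb)
  refine ⟨(q1.copy rfl (p.getVert_length)).append (q2.copy (p.getVert_zero) rfl), ?_⟩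
  simp [hq1, hq2]

end Walks

section MinOdd
variable {V : Type} {G : SimpleGraph V} {v0 : V} {W : G.Walk v0 v0}

/-- closed walk at u through the "rotated" part of W -/
lemma exists_closed_walk_rot {u : V} {a b : ℕ} (hab : a ≤ b) (hb : b ≤ W.length)
    (ha' : G.Adj u (W.getVert a)) (hb' : G.Adj u (W.getVert b)) :
    ∃ q : G.Walk u u, q.length = (W.length - b + a) + 2 := by
  obtain ⟨q, hq⟩ := exists_rot_walk W hab hb
  refine ⟨SimpleGraph.Walk.cons hb' (q.append (SimpleGraph.Walk.cons ha'.symm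
    SimpleGraph.Walk.nil)), ?_⟩
  simp only [SimpleGraph.Walk.length_cons, SimpleGraph.Walk.length_append,
    SimpleGraph.Walk.length_nil, hq]

variable (hmodd : Odd W.length)
  (hmin : ∀ (u : V) (q : G.Walk u u), Odd q.length → W.length ≤ q.length)

include hmodd hmin in
lemma gap_lemma {u : V} {a b : ℕ} (hab : a < b) (hbm : b < W.length)
    (hua : G.Adj u (W.getVert a)) (hub : G.Adj u (W.getVert b)) :
    ((b - a) % 2 = 0 → b - a = 2) ∧ ((b - a) % 2 = 1 → W.length - 2 ≤ b - a) := by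
  obtain ⟨q1, hq1⟩ := exists_closed_walk_of_adj W hab.le hbm.le hua hub
  obtain ⟨q2, hq2⟩ := exists_closed_walk_rot hab.le hbm.le hua hub
  rw [Nat.odd_iff] at hmodd
  constructor
  · intro hpar
    have hodd2 : Odd q2.length := by rw [Nat.odd_iff, hq2]; omega
    have := hmin u q2 hodd2
    omega
  · intro hpar
    have hodd1 : Odd q1.length := by rw [Nat.odd_iff, hq1]; omega
    have := hmin u q1 hodd1
    omega

include hmodd hmin in
lemma walk_inj {i j : ℕ} (hij : i < j) (hjm : j < W.length) :
    W.getVert i ≠ W.getVert j := by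
  intro heq
  obtain ⟨q1, hq1⟩ := exists_walk_getVert W i j hij.le hjm.le
  obtain ⟨q2, hq2⟩ := exists_rot_walk W hij.le hjm.le
  rw [Nat.odd_iff] at hmodd
  rcases Nat.even_or_odd (j - i) with hpar | hpar
  · have := hmin _ (q2.copy rfl heq) (by
      rw [Nat.odd_iff, SimpleGraph.Walk.length_copy, hq2]
      rw [Nat.even_iff] at hpar; omega)
    rw [SimpleGraph.Walk.length_copy, hq2] at this
    omega
  · have := hmin _ (q1.copy rfl heq.symm) (by
      rw [Nat.odd_iff, SimpleGraph.Walk.length_copy, hq1]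
      rw [Nat.odd_iff] at hpar; omega)
    rw [SimpleGraph.Walk.length_copy, hq1] at this
    omega

include hmodd hmin in
lemma no_three (hm5 : 5 ≤ W.length) [DecidableRel G.Adj] (u : V) :
    ((Finset.range W.length).filter (fun i => G.Adj u (W.getVert i))).card ≤ 2 := by
  by_contra hcard
  push_neg at hcard
  set s := (Finset.range W.length).filter (fun i => G.Adj u (W.getVert i)) with hs
  have hne : s.Nonempty := Finset.card_pos.mp (by omega)
  set i := s.min' hne with hi
  set k := s.max' hne with hk
  have hik : i < k := Finset.min'_lt_max'_of_card s (by omega)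
  have hkmem : k ∈ s := s.max'_mem hne
  have himem : i ∈ s := s.min'_mem hne
  have : ((s.erase i).erase k).Nonempty := by
    apply Finset.card_pos.mp
    have h1 := Finset.card_erase_le (a := k) (s := s.erase i)
    have h2 : (s.erase i).card = s.card - 1 := Finset.card_erase_of_mem himem
    have h3 : ((s.erase i).erase k).card = (s.erase i).card - 1 :=
      Finset.card_erase_of_mem (Finset.mem_erase.mpr ⟨hik.ne', hkmem⟩)
    omega
  obtain ⟨j, hj⟩ := this
  have hjs : j ∈ s := Finset.mem_of_mem_erase (Finset.mem_of_mem_erase hj)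
  have hjk : j ≠ k := (Finset.mem_erase.mp hj).1
  have hji : j ≠ i := (Finset.mem_erase.mp (Finset.mem_of_mem_erase hj)).1
  have hij' : i < j := lt_of_le_of_ne (s.min'_le j hjs) (Ne.symm hji)
  have hjk' : j < k := lt_of_le_of_ne (s.le_max' j hjs) hjk
  have hkm : k < W.length := by
    have := (Finset.mem_filter.mp hkmem).1; exact Finset.mem_range.mp this
  have hadj : ∀ a ∈ s, G.Adj u (W.getVert a) := fun a ha => (Finset.mem_filter.mp ha).2
  have g1 := gap_lemma hmodd hmin hij' (lt_trans hjk' hkm) (hadj i himem) (hadj j hjs)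
  have g2 := gap_lemma hmodd hmin hjk' hkm (hadj j hjs) (hadj k hkmem)
  have g3 := gap_lemma hmodd hmin (lt_trans hij' hjk') hkm (hadj i himem) (hadj k hkmem)
  rw [Nat.odd_iff] at hmodd
  omega

end MinOdd

section CharAdj
variable {V : Type} {G : SimpleGraph V} {v0 : V} {W : G.Walk v0 v0}
  (hmodd : Odd W.length)
  (hmin : ∀ (u : V) (q : G.Walk u u), Odd q.length → W.length ≤ q.length)
  (hm5 : 5 ≤ W.length)

include hmodd hmin hm5 in
lemma char_adj [DecidableRel G.Adj] {i j : ℕ} (hi : i < W.length) (hj : j < W.length) :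
    G.Adj (W.getVert i) (W.getVert j) ↔
      (j = i + 1 ∨ i = j + 1 ∨ (i = 0 ∧ j = W.length - 1) ∨ (j = 0 ∧ i = W.length - 1)) := by
  have hwrap : G.Adj (W.getVert 0) (W.getVert (W.length - 1)) := by
    have h1 : W.length - 1 < W.length := by omega
    have := W.adj_getVert_succ (i := W.length - 1) h1
    rw [show W.length - 1 + 1 = W.length from by omega] at this
    rw [SimpleGraph.Walk.getVert_length] at this
    simpa using this.symm
  constructor
  · intro hadj
    by_contra hnot
    push_neg at hnot
    obtain ⟨h1, h2, h3, h4⟩ := hnot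
    have hmem : ∀ a, a < W.length → G.Adj (W.getVert i) (W.getVert a) →
        a ∈ (Finset.range W.length).filter (fun b => G.Adj (W.getVert i) (W.getVert b)) :=
      fun a ha hadja => Finset.mem_filter.mpr ⟨Finset.mem_range.mpr ha, hadja⟩
    have hcard := no_three hmodd hmin hm5 (W.getVert i)
    have hji : j ≠ i := fun h => G.irrefl (h ▸ hadj)
    rcases Nat.eq_zero_or_pos i with hi0 | hipos
    · subst hi0
      have e1 : (1:ℕ) ∈ _ := hmem 1 (by omega) (W.adj_getVert_succ (by omega))
      have e2 : W.length - 1 ∈ _ := hmem (W.length -1) (by omega) hwrap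
      have e3 : j ∈ _ := hmem j hj hadj
      have : 2 < ((Finset.range W.length).filter
          (fun b => G.Adj (W.getVert 0) (W.getVert b))).card :=
        Finset.two_lt_card_iff.mpr ⟨j, 1, W.length - 1, e3, e1, e2, by omega, by omega, by omega⟩
      omega
    rcases Nat.lt_or_ge i (W.length - 1) with him | him
    · -- middle case
      have ep : G.Adj (W.getVert i) (W.getVert (i+1)) := W.adj_getVert_succ (by omega)
      have em : G.Adj (W.getVert i) (W.getVert (i-1)) := by
        have := W.adj_getVert_succ (i := i - 1) (by omega)
        rw [show i - 1 + 1 = i from by omega] at this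
        exact this.symm
      have e1 := hmem (i+1) (by omega) ep
      have e2 := hmem (i-1) (by omega) em
      have e3 := hmem j hj hadj
      have : 2 < ((Finset.range W.length).filter
          (fun b => G.Adj (W.getVert i) (W.getVert b))).card :=
        Finset.two_lt_card_iff.mpr ⟨j, i+1, i-1, e3, e1, e2, by omega, by omega, by omega⟩
      omega
    · -- i = W.length - 1
      have hiL : i = W.length - 1 := by omega
      have em : G.Adj (W.getVert i) (W.getVert (W.length -2)) := by
        have := W.adj_getVert_succ (i := W.length - 2) (by omega)
        rw [show W.length - 2 + 1 = W.length - 1 from by omega] at this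
        rw [hiL]
        exact this.symm
      have e0 : G.Adj (W.getVert i) (W.getVert 0) := by rw [hiL]; exact hwrap.symm
      have e1 := hmem (W.length -2) (by omega) em
      have e2 := hmem 0 (by omega) e0
      have e3 := hmem j hj hadj
      have : 2 < ((Finset.range W.length).filter
          (fun b => G.Adj (W.getVert i) (W.getVert b))).card :=
        Finset.two_lt_card_iff.mpr ⟨j, W.length -2, 0, e3, e1, e2, by omega, by omega, by omega⟩
      omega
  · intro h
    rcases h with rfl | rfl | ⟨rfl, rfl⟩ | ⟨rfl, rfl⟩
    · exact W.adj_getVert_succ (by omega)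
    · exact (W.adj_getVert_succ (by omega)).symm
    · exact hwrap
    · exact hwrap.symm

end CharAdj

section SumHelpers
variable {V : Type} [Fintype V] [DecidableEq V]

lemma sum_delta_mul (s : Finset ℕ) (c : ℕ → ℝ) (f : ℕ → V) (g : V → ℝ) :
    ∑ v : V, (∑ i ∈ s, c i * (if f i = v then 1 else 0)) * g v = ∑ i ∈ s, c i * g (f i) := by
  have h1 : ∀ v : V, (∑ i ∈ s, c i * (if f i = v then 1 else 0)) * g v
      = ∑ i ∈ s, (if f i = v then c i * g v else 0) := by
    intro v
    rw [Finset.sum_mul]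
    exact Finset.sum_congr rfl fun i _ => by
      by_cases h : f i = v <;> simp [h]
  simp only [h1]
  rw [Finset.sum_comm]
  exact Finset.sum_congr rfl fun i _ => by
    rw [Finset.sum_ite_eq]
    simp

lemma dot_expand (M : Matrix V V ℝ) (s : Finset ℕ) (c : ℕ → ℝ) (f : ℕ → V) :
    (fun v => ∑ i ∈ s, c i * (if f i = v then 1 else 0)) ⬝ᵥ
      M.mulVec (fun v => ∑ i ∈ s, c i * (if f i = v then 1 else 0)) =
    ∑ i ∈ s, ∑ j ∈ s, c i * c j * M (f i) (f j) := by
  rw [dotProduct]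
  rw [sum_delta_mul s c f (M.mulVec _)]
  refine Finset.sum_congr rfl fun i _ => ?_
  rw [Matrix.mulVec, dotProduct]
  have : ∑ w : V, M (f i) w * (∑ j ∈ s, c j * (if f j = w then 1 else 0))
      = ∑ w : V, (∑ j ∈ s, c j * (if f j = w then 1 else 0)) * M (f i) w := by
    exact Finset.sum_congr rfl fun w _ => mul_comm _ _
  rw [this, sum_delta_mul s c f (M (f i))]
  rw [Finset.mul_sum]
  exact Finset.sum_congr rfl fun j _ => by ring

lemma dot_self_expand (s : Finset ℕ) (c : ℕ → ℝ) (f : ℕ → V) :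
    (fun v => ∑ i ∈ s, c i * (if f i = v then 1 else 0)) ⬝ᵥ
      (fun v => ∑ i ∈ s, c i * (if f i = v then 1 else 0)) =
    ∑ i ∈ s, c i * (∑ j ∈ s, c j * (if f j = f i then 1 else 0)) := by
  rw [dotProduct, sum_delta_mul s c f]

lemma qentry (G : SimpleGraph V) (v w : V) :
    letI := Classical.decRel G.Adj
    signlessLaplacian G v w =
      (if v = w then (G.degree v : ℝ) else 0) + (if G.Adj v w then 1 else 0) := by
  letI := Classical.decRel G.Adj
  unfold signlessLaplacian
  rw [Matrix.add_apply, Matrix.diagonal_apply, SimpleGraph.adjMatrix_apply]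

end SumHelpers

theorem qmin_base {V : Type} [Fintype V] [DecidableEq V] [Nonempty V] (G : SimpleGraph V)
    (hG : G.CliqueFree 3) : qmin G < 2 / 5 * (Fintype.card V : ℝ) := by
  letI := Classical.decRel G.Adj
  classical
  have hn1 : (1:ℝ) ≤ (Fintype.card V : ℝ) := by
    have := Fintype.card_pos (α := V)
    exact_mod_cast this
  by_cases hodd : ∃ L, Odd L ∧ ∃ (v : V) (p : G.Walk v v), p.length = L
  · obtain ⟨hm_odd, v0, W, hWlen⟩ := Nat.find_spec hodd
    have hmodd' : Odd W.length := by rw [hWlen]; exact hm_odd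
    have hminW : ∀ (u : V) (q : G.Walk u u), Odd q.length → W.length ≤ q.length := by
      intro u q hq
      by_contra hlt
      push_neg at hlt
      rw [hWlen] at hlt
      exact Nat.find_min hodd hlt ⟨hq, u, q, rfl⟩
    have hm5 : 5 ≤ W.length := by
      have h1 : W.length ≠ 1 := by
        intro h
        have h2 := W.adj_getVert_succ (i := 0) (by omega)
        rw [SimpleGraph.Walk.getVert_zero] at h2
        rw [show (0:ℕ)+1 = W.length from by omega, SimpleGraph.Walk.getVert_length] at h2
        exact G.irrefl h2
      have h3 : W.length ≠ 3 := by
        intro h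
        have a01 := W.adj_getVert_succ (i := 0) (by omega)
        have a12 := W.adj_getVert_succ (i := 1) (by omega)
        have a23 := W.adj_getVert_succ (i := 2) (by omega)
        rw [show (2:ℕ)+1 = W.length from by omega, SimpleGraph.Walk.getVert_length] at a23
        rw [SimpleGraph.Walk.getVert_zero] at a01
        exact hG {v0, W.getVert 1, W.getVert (1+1)}
          (SimpleGraph.is3Clique_triple_iff.mpr ⟨a01, a23.symm, a12⟩)
      rw [Nat.odd_iff] at hmodd'
      omega
    have hinj : ∀ i j, i < W.length → j < W.length → W.getVert i = W.getVert j → i = j := by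
      intro i j hi hj heq
      rcases Nat.lt_trichotomy i j with h | h | h
      · exact absurd heq (walk_inj hmodd' hminW h hj)
      · exact h
      · exact absurd heq.symm (walk_inj hmodd' hminW h hi)
    set x : V → ℝ := fun v =>
      ∑ i ∈ Finset.range W.length, (-1:ℝ)^i * (if W.getVert i = v then 1 else 0) with hx
    have hxfi : ∀ i, i < W.length →
        (∑ j ∈ Finset.range W.length,
          (-1:ℝ)^j * (if W.getVert j = W.getVert i then 1 else 0)) = (-1:ℝ)^i := by
      intro i hi
      rw [Finset.sum_eq_single i]
      · simp
      · intro j hj hji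
        rw [if_neg (fun heq => hji (hinj j i (Finset.mem_range.mp hj) hi heq))]
        ring
      · intro habs
        exact absurd (Finset.mem_range.mpr hi) habs
    have hxx : x ⬝ᵥ x = (W.length : ℝ) := by
      rw [hx, dot_self_expand]
      have : ∀ i ∈ Finset.range W.length, (-1:ℝ)^i *
          (∑ j ∈ Finset.range W.length,
            (-1:ℝ)^j * (if W.getVert j = W.getVert i then 1 else 0)) = 1 := by
        intro i hi
        rw [hxfi i (Finset.mem_range.mp hi), ← pow_add]
        exact Even.neg_one_pow ⟨i, rfl⟩
      rw [Finset.sum_congr rfl this, Finset.sum_const, Finset.card_range, nsmul_eq_mul, mul_one]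
    have hfil : ∀ i, i < W.length →
        (Finset.range W.length).filter (fun j => G.Adj (W.getVert i) (W.getVert j)) =
        (if i = 0 then {1, W.length - 1} else if i = W.length - 1 then {W.length - 2, 0}
          else {i - 1, i + 1}) := by
      intro i hi
      ext j
      simp only [Finset.mem_filter, Finset.mem_range]
      constructor
      · rintro ⟨hj, hadj⟩
        have hc := (char_adj hmodd' hminW hm5 hi hj).mp hadj
        split_ifs with h0 hiM
        · simp only [Finset.mem_insert, Finset.mem_singleton]; omega
        · simp only [Finset.mem_insert, Finset.mem_singleton]; omega
        · simp only [Finset.mem_insert, Finset.mem_singleton]; omega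
      · intro hmem
        split_ifs at hmem with h0 hiM
        · simp only [Finset.mem_insert, Finset.mem_singleton] at hmem
          rcases hmem with rfl | rfl
          · exact ⟨by omega, (char_adj hmodd' hminW hm5 hi (by omega)).mpr (by omega)⟩
          · exact ⟨by omega, (char_adj hmodd' hminW hm5 hi (by omega)).mpr (by omega)⟩
        · simp only [Finset.mem_insert, Finset.mem_singleton] at hmem
          rcases hmem with rfl | rfl
          · exact ⟨by omega, (char_adj hmodd' hminW hm5 hi (by omega)).mpr (by omega)⟩
          · exact ⟨by omega, (char_adj hmodd' hminW hm5 hi (by omega)).mpr (by omega)⟩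
        · simp only [Finset.mem_insert, Finset.mem_singleton] at hmem
          rcases hmem with rfl | rfl
          · exact ⟨by omega, (char_adj hmodd' hminW hm5 hi (by omega)).mpr (by omega)⟩
          · exact ⟨by omega, (char_adj hmodd' hminW hm5 hi (by omega)).mpr (by omega)⟩
    have hAS : ∑ i ∈ Finset.range W.length, ∑ j ∈ Finset.range W.length,
        (-1:ℝ)^i * (-1:ℝ)^j * (if G.Adj (W.getVert i) (W.getVert j) then (1:ℝ) else 0) =
        -2 * ((W.length : ℝ) - 2) := by
      have hstep : ∀ i ∈ Finset.range W.length,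
          (∑ j ∈ Finset.range W.length, (-1:ℝ)^i * (-1:ℝ)^j *
            (if G.Adj (W.getVert i) (W.getVert j) then (1:ℝ) else 0)) =
          (if i = 0 ∨ i = W.length - 1 then (0:ℝ) else -2) := by
        intro i hi
        have hi' := Finset.mem_range.mp hi
        have h1 : ∀ j, (-1:ℝ)^i * (-1:ℝ)^j *
            (if G.Adj (W.getVert i) (W.getVert j) then (1:ℝ) else 0) =
            (if G.Adj (W.getVert i) (W.getVert j) then (-1:ℝ)^i * (-1:ℝ)^j else 0) := by
          intro j; by_cases h : G.Adj (W.getVert i) (W.getVert j) <;> simp [h]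
        rw [Finset.sum_congr rfl (fun j _ => h1 j), ← Finset.sum_filter, hfil i hi']
        rw [Nat.odd_iff] at hmodd'
        by_cases h0 : i = 0
        · subst h0
          rw [if_pos rfl, if_pos (Or.inl rfl)]
          rw [Finset.sum_pair (by omega : (1:ℕ) ≠ W.length - 1)]
          have e1 : ((-1:ℝ))^(W.length - 1) = 1 :=
            Even.neg_one_pow (by rw [Nat.even_iff]; omega)
          simp [e1]
        · by_cases hM : i = W.length - 1
          · subst hM
            rw [if_neg h0, if_pos rfl, if_pos (Or.inr rfl)]
            rw [Finset.sum_pair (by omega : W.length - 2 ≠ 0)]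
            have e1 : ((-1:ℝ))^(W.length - 1) = 1 :=
              Even.neg_one_pow (by rw [Nat.even_iff]; omega)
            have e2 : ((-1:ℝ))^(W.length - 2) = -1 :=
              Odd.neg_one_pow (by rw [Nat.odd_iff]; omega)
            simp [e1, e2]
          · rw [if_neg h0, if_neg hM, if_neg (by push_neg; exact ⟨h0, hM⟩)]
            rw [Finset.sum_pair (by omega : i - 1 ≠ i + 1)]
            obtain ⟨i', rfl⟩ : ∃ i', i = i' + 1 := ⟨i - 1, by omega⟩
            have key : (-1:ℝ)^i' * (-1:ℝ)^i' = 1 := by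
              rw [← pow_add]; exact Even.neg_one_pow ⟨i', rfl⟩
            rw [show i' + 1 - 1 = i' from by omega]
            linear_combination (-2 : ℝ) * key
      rw [Finset.sum_congr rfl hstep]
      rw [Finset.sum_ite]
      have hP : (Finset.range W.length).filter (fun i => i = 0 ∨ i = W.length - 1) =
          {0, W.length - 1} := by
        ext a
        simp only [Finset.mem_filter, Finset.mem_range, Finset.mem_insert,
          Finset.mem_singleton]
        omega
      have hPcard : ((Finset.range W.length).filter
          (fun i => i = 0 ∨ i = W.length - 1)).card = 2 := by
        rw [hP]
        rw [Finset.card_insert_of_notMem (by simp; omega), Finset.card_singleton]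
      have htot := Finset.card_filter_add_card_filter_not
        (s := Finset.range W.length) (p := fun i => i = 0 ∨ i = W.length - 1)
      rw [Finset.card_range] at htot
      have hNcard : ((Finset.range W.length).filter
          (fun i => ¬(i = 0 ∨ i = W.length - 1))).card = W.length - 2 := by omega
      rw [Finset.sum_const_zero, Finset.sum_const, hNcard, zero_add, nsmul_eq_mul]
      have : ((W.length - 2 : ℕ) : ℝ) = (W.length : ℝ) - 2 := by
        have : 2 ≤ W.length := by omega
        push_cast [Nat.cast_sub this]
        ring
      rw [this]
      ring
    have hDSnat : ∑ i ∈ Finset.range W.length, G.degree (W.getVert i) ≤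
        2 * Fintype.card V := by
      have hdeg : ∀ w : V, G.degree w = ∑ u : V, if G.Adj u w then 1 else 0 := by
        intro w
        rw [← SimpleGraph.card_neighborFinset_eq_degree, SimpleGraph.neighborFinset_eq_filter,
          Finset.card_filter]
        exact Finset.sum_congr rfl fun u _ => if_congr (G.adj_comm w u) rfl rfl
      calc ∑ i ∈ Finset.range W.length, G.degree (W.getVert i)
          = ∑ i ∈ Finset.range W.length, ∑ u : V,
            (if G.Adj u (W.getVert i) then 1 else 0) :=
            Finset.sum_congr rfl fun i _ => hdeg _
        _ = ∑ u : V, ∑ i ∈ Finset.range W.length,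
            (if G.Adj u (W.getVert i) then 1 else 0) := Finset.sum_comm
        _ ≤ ∑ _u : V, 2 := Finset.sum_le_sum (fun u _ => by
            rw [← Finset.card_filter]
            exact no_three hmodd' hminW hm5 u)
        _ = 2 * Fintype.card V := by
          rw [Finset.sum_const, Finset.card_univ, smul_eq_mul, mul_comm]
    have hxQ : x ⬝ᵥ (signlessLaplacian G).mulVec x ≤
        2 * (Fintype.card V : ℝ) - 2 * ((W.length : ℝ) - 2) := by
      rw [hx, dot_expand]
      have hsplit : ∀ i ∈ Finset.range W.length, ∀ j ∈ Finset.range W.length,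
          (-1:ℝ)^i * (-1:ℝ)^j * (signlessLaplacian G (W.getVert i) (W.getVert j)) =
          (-1:ℝ)^i * (-1:ℝ)^j *
            (if W.getVert i = W.getVert j then (G.degree (W.getVert i) : ℝ) else 0) +
          (-1:ℝ)^i * (-1:ℝ)^j *
            (if G.Adj (W.getVert i) (W.getVert j) then (1:ℝ) else 0) := by
        intro i _ j _
        rw [qentry]
        ring
      rw [Finset.sum_congr rfl (fun i hi => Finset.sum_congr rfl (fun j hj =>
        hsplit i hi j hj))]
      rw [Finset.sum_congr rfl (fun i (_ : i ∈ Finset.range W.length) =>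
        Finset.sum_add_distrib)]
      rw [Finset.sum_add_distrib, hAS]
      have hD : ∑ i ∈ Finset.range W.length, ∑ j ∈ Finset.range W.length,
          (-1:ℝ)^i * (-1:ℝ)^j *
            (if W.getVert i = W.getVert j then (G.degree (W.getVert i) : ℝ) else 0) =
          ∑ i ∈ Finset.range W.length, (G.degree (W.getVert i) : ℝ) := by
        refine Finset.sum_congr rfl fun i hi => ?_
        have hi' := Finset.mem_range.mp hi
        rw [Finset.sum_eq_single i]
        · rw [if_pos rfl, ← pow_add, Even.neg_one_pow ⟨i, rfl⟩, one_mul]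
        · intro j hj hji
          rw [if_neg (fun heq => hji ((hinj i j hi' (Finset.mem_range.mp hj) heq).symm))]
          ring
        · intro habs
          exact absurd hi habs
      rw [hD]
      have : (∑ i ∈ Finset.range W.length, (G.degree (W.getVert i) : ℝ)) ≤
          2 * (Fintype.card V : ℝ) := by
        have := hDSnat
        push_cast
        exact_mod_cast this
      linarith
    have hxne : x ≠ 0 := by
      intro h
      have h0 := congrFun h (W.getVert 0)
      rw [hx] at h0
      simp only [Pi.zero_apply] at h0
      rw [hxfi 0 (by omega)] at h0
      norm_num at h0
    apply qmin_lt_of_lt hxne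
    rw [hxx]
    have hm5' : (5:ℝ) ≤ (W.length : ℝ) := by exact_mod_cast hm5
    calc x ⬝ᵥ (signlessLaplacian G).mulVec x ≤
        2 * (Fintype.card V : ℝ) - 2 * ((W.length : ℝ) - 2) := hxQ
      _ < 2 / 5 * (Fintype.card V : ℝ) * (W.length : ℝ) := by
          nlinarith [mul_nonneg (sub_nonneg.mpr hm5') (sub_nonneg.mpr hn1)]
  · -- no odd closed walk: kernel vector
    have hpar : ∀ v (p q : G.Walk v v), ¬ Odd p.length := by
      intro v p q hp
      exact hodd ⟨p.length, hp, v, p, rfl⟩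
    set v0 := Classical.arbitrary V with hv0
    set x : V → ℝ := fun v =>
      if ∃ p : G.Walk v0 v, Even p.length then 1
      else if ∃ p : G.Walk v0 v, Odd p.length then -1 else 0 with hx
    have hboth : ∀ v, (∃ p : G.Walk v0 v, Even p.length) →
        (∃ p : G.Walk v0 v, Odd p.length) → False := by
      rintro v ⟨p, hp⟩ ⟨q, hq⟩
      apply hodd
      refine ⟨(q.append p.reverse).length, ?_, v0, q.append p.reverse, rfl⟩
      rw [SimpleGraph.Walk.length_append, SimpleGraph.Walk.length_reverse]
      rw [Nat.odd_iff] at hq ⊢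
      rw [Nat.even_iff] at hp
      omega
    have hx0 : x v0 = 1 := by
      rw [hx]
      simp only []
      rw [if_pos ⟨SimpleGraph.Walk.nil, by simp⟩]
    have hnbr : ∀ v u, G.Adj v u → x u = - x v := by
      intro v u hadj
      by_cases h1 : ∃ p : G.Walk v0 v, Even p.length
      · obtain ⟨p, hp⟩ := h1
        have hu_odd : ∃ p : G.Walk v0 u, Odd p.length :=
          ⟨p.concat hadj, by rw [SimpleGraph.Walk.length_concat]; exact Even.add_one hp⟩
        have hu_ne : ¬ ∃ p : G.Walk v0 u, Even p.length :=
          fun h => hboth u h hu_odd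
        rw [hx]
        simp only []
        rw [if_neg hu_ne, if_pos hu_odd, if_pos ⟨p, hp⟩]
      · by_cases h2 : ∃ p : G.Walk v0 v, Odd p.length
        · obtain ⟨p, hp⟩ := h2
          have hu_even : ∃ p : G.Walk v0 u, Even p.length :=
            ⟨p.concat hadj, by rw [SimpleGraph.Walk.length_concat]; exact hp.add_one⟩
          rw [hx]
          simp only []
          rw [if_pos hu_even, if_neg h1, if_pos ⟨p, hp⟩]
          norm_num
        · have hu1 : ¬ ∃ p : G.Walk v0 u, Even p.length := by
            rintro ⟨p, hp⟩
            exact h2 ⟨p.concat hadj.symm, by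
              rw [SimpleGraph.Walk.length_concat]; exact Even.add_one hp⟩
          have hu2 : ¬ ∃ p : G.Walk v0 u, Odd p.length := by
            rintro ⟨p, hp⟩
            exact h1 ⟨p.concat hadj.symm, by
              rw [SimpleGraph.Walk.length_concat]; exact hp.add_one⟩
          rw [hx]
          simp only []
          rw [if_neg hu1, if_neg hu2, if_neg h1, if_neg h2]
          norm_num
    have hQx : (signlessLaplacian G).mulVec x = 0 := by
      funext v
      rw [Pi.zero_apply]
      unfold signlessLaplacian
      rw [Matrix.add_mulVec, Pi.add_apply, Matrix.mulVec_diagonal,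
        SimpleGraph.adjMatrix_mulVec_apply]
      have : ∀ u ∈ G.neighborFinset v, x u = - x v := fun u hu =>
        hnbr v u ((SimpleGraph.mem_neighborFinset G v u).mp hu)
      rw [Finset.sum_congr rfl this, Finset.sum_const, SimpleGraph.degree]
      simp only [nsmul_eq_mul]
      ring
    have hxne : x ≠ 0 := by
      intro h
      have := congrFun h v0
      rw [hx0] at this
      simp at this
    apply qmin_lt_of_lt hxne
    rw [hQx]
    simp only [dotProduct_zero]
    have h1 : (0:ℝ) < 2 / 5 * (Fintype.card V : ℝ) := by positivity
    exact mul_pos h1 (dotProduct_self_pos hxne)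

section Nbhd
variable {V : Type} [Fintype V] [DecidableEq V] (G : SimpleGraph V)

/-- the induced subgraph on the neighborhood of `u`, as a comap -/
noncomputable def nbhdGraph (u : V) :
    SimpleGraph {v // v ∈ (letI := Classical.decRel G.Adj; G.neighborFinset u)} :=
  G.comap (Subtype.val)

lemma nbhdGraph_cliqueFree (u : V) {r : ℕ} (hG : G.CliqueFree (r + 1)) :
    (nbhdGraph G u).CliqueFree r := by
  letI := Classical.decRel G.Adj
  intro t ht
  apply hG (insert u (t.image (Subtype.val)))
  have hcard : (t.image (Subtype.val)).card = r :=
    (Finset.card_image_of_injective t Subtype.val_injective).trans ht.2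
  have hunotmem : u ∉ t.image (Subtype.val) := by
    intro hmem
    obtain ⟨a, _, ha⟩ := Finset.mem_image.mp hmem
    have : G.Adj u a := (SimpleGraph.mem_neighborFinset G u a).mp a.2
    rw [ha] at this
    exact G.irrefl this
  constructor
  · intro v hv w hw hvw
    simp only [Finset.coe_insert, Set.mem_insert_iff, Finset.mem_coe] at hv hw
    rcases hv with rfl | hv
    · rcases hw with rfl | hw
      · exact absurd rfl hvw
      · obtain ⟨b, _, rfl⟩ := Finset.mem_image.mp hw
        exact (SimpleGraph.mem_neighborFinset G v b).mp b.2
    · rcases hw with rfl | hw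
      · obtain ⟨b, _, rfl⟩ := Finset.mem_image.mp hv
        exact ((SimpleGraph.mem_neighborFinset G w b).mp b.2).symm
      · obtain ⟨a, hat, rfl⟩ := Finset.mem_image.mp hv
        obtain ⟨b, hbt, rfl⟩ := Finset.mem_image.mp hw
        have hab : a ≠ b := fun h => hvw (by rw [h])
        exact ht.1 hat hbt hab
  · rw [Finset.card_insert_of_notMem hunotmem, hcard]

lemma nbhdGraph_degree (u : V) (a : {v // v ∈ (letI := Classical.decRel G.Adj;
    G.neighborFinset u)}) :
    letI := Classical.decRel G.Adj
    letI := Classical.decRel (nbhdGraph G u).Adj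
    G.degree a.val ≤ (nbhdGraph G u).degree a +
      (Fintype.card V - G.degree u) := by
  letI := Classical.decRel G.Adj
  letI := Classical.decRel (nbhdGraph G u).Adj
  have h1 : (nbhdGraph G u).degree a = ((G.neighborFinset a.val) ∩ G.neighborFinset u).card := by
    rw [← SimpleGraph.card_neighborFinset_eq_degree]
    apply Finset.card_bij (fun b _ => b.val)
    · intro b hb
      rw [Finset.mem_inter]
      have hadj : (nbhdGraph G u).Adj a b := (SimpleGraph.mem_neighborFinset _ a b).mp hb
      exact ⟨(SimpleGraph.mem_neighborFinset G _ _).mpr hadj, b.2⟩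
    · intro b _ c _ h
      exact Subtype.val_injective h
    · intro w hw
      rw [Finset.mem_inter] at hw
      refine ⟨⟨w, hw.2⟩, ?_, rfl⟩
      exact (SimpleGraph.mem_neighborFinset _ a ⟨w, hw.2⟩).mpr
        ((SimpleGraph.mem_neighborFinset G _ _).mp hw.1)
  have h2 : G.degree a.val = ((G.neighborFinset a.val) ∩ G.neighborFinset u).card +
      ((G.neighborFinset a.val) \ G.neighborFinset u).card := by
    rw [← SimpleGraph.card_neighborFinset_eq_degree]
    exact (Finset.card_inter_add_card_sdiff _ _).symm
  have h3 : ((G.neighborFinset a.val) \ G.neighborFinset u).card ≤ Fintype.card V - G.degree u := by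
    have hsub : (G.neighborFinset a.val) \ G.neighborFinset u ⊆ Finset.univ \ G.neighborFinset u :=
      Finset.sdiff_subset_sdiff (Finset.subset_univ _) le_rfl
    have := Finset.card_le_card hsub
    rwa [Finset.card_sdiff_of_subset (Finset.subset_univ _), Finset.card_univ,
      SimpleGraph.card_neighborFinset_eq_degree] at this
  omega

end Nbhd

section Extend
variable {V : Type} [Fintype V] [DecidableEq V]

lemma qmin_le_nbhd (G : SimpleGraph V) [Nonempty V] (u : V)
    (hne : Nonempty {v // v ∈ (letI := Classical.decRel G.Adj; G.neighborFinset u)}) :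
    letI := Classical.decRel G.Adj
    qmin G ≤ qmin (nbhdGraph G u) + ((Fintype.card V : ℝ) - G.degree u) := by
  letI := Classical.decRel G.Adj
  letI := Classical.decRel (nbhdGraph G u).Adj
  obtain ⟨y, hy0, hyeig⟩ :=
    exists_min_eigenvector (signlessLaplacian_isHermitian (nbhdGraph G u))
  have hyQ : y ⬝ᵥ (signlessLaplacian (nbhdGraph G u)).mulVec y =
      qmin (nbhdGraph G u) * (y ⬝ᵥ y) := by
    rw [hyeig, dotProduct_smul, smul_eq_mul]; rfl
  set x : V → ℝ := fun v => if h : v ∈ G.neighborFinset u then y ⟨v, h⟩ else 0 with hx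
  have hxzero : ∀ v, v ∉ G.neighborFinset u → x v = 0 := by
    intro v hv; rw [hx]; exact dif_neg hv
  have hxv : ∀ a : {v // v ∈ G.neighborFinset u}, x a.val = y a := by
    intro a; rw [hx]; simp only [a.2, dif_pos]
  have hrestrict : ∀ F : V → ℝ, (∀ v, v ∉ G.neighborFinset u → F v = 0) →
      ∑ v : V, F v = ∑ a : {v // v ∈ G.neighborFinset u}, F a.val := by
    intro F hF
    rw [Finset.univ_eq_attach, Finset.sum_attach (G.neighborFinset u) F]
    exact (Finset.sum_subset (Finset.subset_univ _) (fun v _ hv => hF v hv)).symm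
  have hxx : x ⬝ᵥ x = y ⬝ᵥ y := by
    rw [dotProduct, dotProduct,
      hrestrict (fun v => x v * x v) (fun v hv => by simp [hxzero v hv])]
    exact Finset.sum_congr rfl fun a _ => by simp only [hxv a]
  set δ : ℝ := ((Fintype.card V - G.degree u : ℕ) : ℝ) with hδ
  have hdegcast : ∀ a : {v // v ∈ G.neighborFinset u},
      (G.degree a.val : ℝ) ≤ ((nbhdGraph G u).degree a : ℝ) + δ := by
    intro a
    have := nbhdGraph_degree G u a
    rw [hδ]
    exact_mod_cast this
  have hQbound : x ⬝ᵥ (signlessLaplacian G).mulVec x ≤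
      (qmin (nbhdGraph G u) + δ) * (y ⬝ᵥ y) := by
    rw [quadform G x]
    have hdsum : ∑ v : V, (G.degree v : ℝ) * x v ^ 2 =
        ∑ a : {v // v ∈ G.neighborFinset u}, (G.degree a.val : ℝ) * y a ^ 2 := by
      rw [hrestrict (fun v => (G.degree v : ℝ) * x v ^ 2)
        (fun v hv => by simp [hxzero v hv])]
      exact Finset.sum_congr rfl fun a _ => by simp only [hxv a]
    have hasum : ∑ v : V, ∑ w : V, (if G.Adj v w then x v * x w else 0) =
        ∑ a : {v // v ∈ G.neighborFinset u}, ∑ b : {v // v ∈ G.neighborFinset u},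
          (if (nbhdGraph G u).Adj a b then y a * y b else 0) := by
      rw [hrestrict (fun v => ∑ w : V, (if G.Adj v w then x v * x w else 0))
        (fun v hv => by
          beta_reduce
          exact Finset.sum_eq_zero (fun w _ => by
            rw [hxzero v hv]
            by_cases h : G.Adj v w <;> simp [h]))]
      refine Finset.sum_congr rfl fun a _ => ?_
      rw [hrestrict (fun w => if G.Adj a.val w then x a.val * x w else 0)
        (fun w hw => by
          beta_reduce
          rw [hxzero w hw]
          by_cases h : G.Adj a.val w <;> simp [h])]
      refine Finset.sum_congr rfl fun b _ => ?_
      beta_reduce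
      rw [hxv a, hxv b]
      exact if_congr Iff.rfl rfl rfl
    rw [hdsum, hasum]
    have hdle : ∑ a : {v // v ∈ G.neighborFinset u}, (G.degree a.val : ℝ) * y a ^ 2 ≤
        ∑ a : {v // v ∈ G.neighborFinset u},
          (((nbhdGraph G u).degree a : ℝ) + δ) * y a ^ 2 :=
      Finset.sum_le_sum fun a _ =>
        mul_le_mul_of_nonneg_right (hdegcast a) (sq_nonneg _)
    have hyy : ∑ a : {v // v ∈ G.neighborFinset u}, y a ^ 2 = y ⬝ᵥ y := by
      rw [dotProduct]; exact Finset.sum_congr rfl fun a _ => sq (y a)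
    have hq := quadform (nbhdGraph G u) y
    calc ∑ a : {v // v ∈ G.neighborFinset u}, (G.degree a.val : ℝ) * y a ^ 2 +
          ∑ a : {v // v ∈ G.neighborFinset u}, ∑ b : {v // v ∈ G.neighborFinset u},
            (if (nbhdGraph G u).Adj a b then y a * y b else 0)
        ≤ (∑ a : {v // v ∈ G.neighborFinset u},
            (((nbhdGraph G u).degree a : ℝ) + δ) * y a ^ 2) +
          ∑ a : {v // v ∈ G.neighborFinset u}, ∑ b : {v // v ∈ G.neighborFinset u},
            (if (nbhdGraph G u).Adj a b then y a * y b else 0) := by linarith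
      _ = y ⬝ᵥ (signlessLaplacian (nbhdGraph G u)).mulVec y + δ * (y ⬝ᵥ y) := by
          rw [hq, ← hyy]
          rw [Finset.sum_congr rfl (fun (a : {v // v ∈ G.neighborFinset u}) _ =>
            (add_mul ((nbhdGraph G u).degree a : ℝ) δ (y a ^ 2)))]
          rw [Finset.sum_add_distrib, Finset.mul_sum]
          ring
      _ = (qmin (nbhdGraph G u) + δ) * (y ⬝ᵥ y) := by rw [hyQ]; ring
  have hxne : x ≠ 0 := by
    intro h
    apply hy0
    funext a
    have := congrFun h a.val
    rw [hxv a] at this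
    exact this
  have := qmin_le_of_le hxne (by rw [hxx]; exact hQbound)
  have hδeq : δ = (Fintype.card V : ℝ) - G.degree u := by
    rw [hδ]
    have hle : G.degree u ≤ Fintype.card V := by
      rw [← SimpleGraph.card_neighborFinset_eq_degree]
      exact (Finset.card_le_univ _).trans (le_of_eq Finset.card_univ)
    push_cast [Nat.cast_sub hle]
    ring
  rw [hδeq] at this
  exact this

end Extend

theorem main_aux (r : ℕ) (hr : 2 ≤ r) :
    ∀ (V : Type) (_ : Fintype V) (_ : DecidableEq V) (_ : Nonempty V)
      (G : SimpleGraph V), G.CliqueFree (r + 1) →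
      qmin G < (1 - 3 / (3 * (r : ℝ) - 1)) * Fintype.card V := by
  induction r, hr using Nat.le_induction with
  | base =>
    intro V iF iD iN G hG
    have h1 : (1 - 3 / (3 * ((2:ℕ) : ℝ) - 1)) = 2 / 5 := by norm_num
    rw [h1]
    exact qmin_base G hG
  | succ r hr IH =>
    intro V iF iD iN G hG
    letI := Classical.decRel G.Adj
    set R := (r : ℝ) with hRdef
    have hR : (2:ℝ) ≤ R := by rw [hRdef]; exact_mod_cast hr
    have hn1 : (1:ℝ) ≤ (Fintype.card V : ℝ) := by
      exact_mod_cast Fintype.card_pos (α := V)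
    have hcast : (1 - 3 / (3 * ((r + 1 : ℕ) : ℝ) - 1)) = 1 - 3 / (3 * R + 2) := by
      push_cast
      ring_nf
      rfl
    rw [hcast]
    by_cases hdeg : ∃ v : V, (G.degree v : ℝ) < (1 - 3 / (3 * R + 2)) * Fintype.card V
    · obtain ⟨v, hv⟩ := hdeg
      exact lt_of_le_of_lt (qmin_le_degree G v) hv
    · push_neg at hdeg
      set u := Classical.arbitrary V with hu
      have hdu := hdeg u
      have h8 : (0:ℝ) < 3 * R + 2 := by linarith
      have h5 : (0:ℝ) < 3 * R - 1 := by linarith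
      have hcpos : (0:ℝ) < 1 - 3 / (3 * R + 2) := by
        rw [sub_pos, div_lt_one h8]
        linarith
      have hdpos : (0:ℝ) < (G.degree u : ℝ) :=
        lt_of_lt_of_le (by positivity) hdu
      have hdunat : 0 < G.degree u := by exact_mod_cast hdpos
      have hSne : Nonempty {v // v ∈ G.neighborFinset u} := by
        rw [← Fintype.card_pos_iff, Fintype.card_coe,
          SimpleGraph.card_neighborFinset_eq_degree]
        exact hdunat
      have hH : (nbhdGraph G u).CliqueFree (r + 1) := nbhdGraph_cliqueFree G u hG
      have hIH := IH _ (by infer_instance) (by infer_instance) hSne (nbhdGraph G u) hH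
      have hcard : (Fintype.card {v // v ∈ G.neighborFinset u} : ℝ) = G.degree u := by
        rw [Fintype.card_coe, SimpleGraph.card_neighborFinset_eq_degree]
      rw [hcard] at hIH
      have hext := qmin_le_nbhd G u hSne
      set d := (G.degree u : ℝ) with hd
      set n := (Fintype.card V : ℝ) with hn
      have hne8 : (3 * R + 2) ≠ 0 := ne_of_gt h8
      have hne5 : (3 * R - 1) ≠ 0 := ne_of_gt h5
      have h1 : (1 - 3 / (3 * R + 2)) * (3 * R + 2) = 3 * R - 1 := by
        field_simp
        ring
      have hmul := mul_le_mul_of_nonneg_right hdu (le_of_lt h8)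
      have h2 : (1 - 3 / (3 * R + 2)) * n * (3 * R + 2) = (3 * R - 1) * n := by
        rw [mul_comm (1 - 3 / (3 * R + 2)) n, mul_assoc, h1]
        ring
      have hd' : n * (3 * R - 1) ≤ d * (3 * R + 2) := by
        rw [h2] at hmul
        linarith
      have h9 : 3 * n / (3 * R + 2) ≤ 3 * d / (3 * R - 1) := by
        rw [div_le_div_iff₀ h8 h5]
        nlinarith [hd']
      have hL : (1 - 3 / (3 * R - 1)) * d + (n - d) = n - 3 * d / (3 * R - 1) := by
        field_simp
        ring
      have hRt : (1 - 3 / (3 * R + 2)) * n = n - 3 * n / (3 * R + 2) := by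
        field_simp
      calc qmin G ≤ qmin (nbhdGraph G u) + (n - d) := hext
        _ < (1 - 3 / (3 * R - 1)) * d + (n - d) := by linarith
        _ = n - 3 * d / (3 * R - 1) := hL
        _ ≤ n - 3 * n / (3 * R + 2) := by linarith
        _ = (1 - 3 / (3 * R + 2)) * n := hRt.symm


/-- If `r ≥ 3` and `G` is a `K_{r+1}`-free graph of order `n`, then
`qmin G < (1 - 3/(3r - 1))·n`. -/
theorem qmin_lt_of_cliqueFree {r n : ℕ} (hr : 3 ≤ r) (hn : 0 < n)
    (G : SimpleGraph (Fin n)) (hG : G.CliqueFree (r + 1)) :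
    qmin G < (1 - 3 / (3 * (r : ℝ) - 1)) * n := by
  have hne : Nonempty (Fin n) := ⟨⟨0, hn⟩⟩
  have := main_aux r (by omega) (Fin n) (by infer_instance) (by infer_instance) hne G hG
  rwa [Fintype.card_fin] at this
end

section
/- Let t ≥ 2 and let G be a graph of order n with vertex degrees d_1, …, d_n, and let q̄_1, …, q̄_n be the signless Laplacian eigenvalues of the complement Ḡ of G. Then the multiset of signless Laplacian eigenvalues of the complement of the blowup, \overline{G^(t)}, equals { t·q̄_1 + 2(t−1), …, t·q̄_n + 2(t−1) } together with each of tn − td_1 − 2, …, tn − td_n − 2 repeated t−1 times. -/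
open Matrix SimpleGraph Finset

/-- The multiset of signless Laplacian eigenvalues (with multiplicity) of `G`. -/
noncomputable def qSpectrum {V : Type} [Fintype V] [DecidableEq V]
    (G : SimpleGraph V) : Multiset ℝ :=
  Finset.univ.val.map (signlessLaplacian_isHermitian G).eigenvalues

/-- The blowup `G^(t)`: each vertex `u` of `G` is replaced by `t` independent vertices,
and each edge by a complete bipartite graph between the corresponding sets. -/
def blowup {V : Type} (G : SimpleGraph V) (t : ℕ) : SimpleGraph (V × Fin t) :=
  G.comap Prod.fst

/-- The degree of a vertex, as a real number. -/
noncomputable def degR {V : Type} [Fintype V] (G : SimpleGraph V) (v : V) : ℝ :=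
  letI := Classical.decRel G.Adj
  (G.degree v : ℝ)



section Aux
open Polynomial Kronecker
variable {n : Type*} [Fintype n] [DecidableEq n] {R : Type*} [CommRing R]


lemma my_charpoly_diagonal (d : n → R) :
    (Matrix.diagonal d).charpoly = ∏ i, (X - C (d i)) := by
  have : charmatrix (diagonal d) = diagonal (fun i => X - C (d i)) := by
    ext i j
    by_cases h : i = j
    · subst h; simp [charmatrix_apply_eq]
    · simp [charmatrix_apply_ne _ _ _ h, Matrix.diagonal_apply_ne _ h]
  rw [Matrix.charpoly, this, det_diagonal]

lemma my_charpoly_similar {A B P : Matrix n n R} (hP : IsUnit P.det)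
    (h : P * A = B * P) : A.charpoly = B.charpoly := by
  have hmap : P.map C * charmatrix A = charmatrix B * P.map C := by
    unfold charmatrix
    rw [Matrix.mul_sub, Matrix.sub_mul]
    congr 1
    · exact (Matrix.scalar_commute (X : R[X]) (fun r => Commute.all _ _) (P.map C)).symm
    · simp only [RingHom.mapMatrix_apply]
      rw [← Matrix.map_mul, ← Matrix.map_mul, h]
  have hdet : IsUnit (P.map C).det := by
    have : (P.map C).det = C P.det := by
      rw [C.map_det]; rfl
    rw [this]
    exact hP.map C
  have := congrArg Matrix.det hmap
  rw [Matrix.det_mul, Matrix.det_mul] at this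
  unfold Matrix.charpoly
  exact hdet.mul_left_cancel (by rw [this, mul_comm])

lemma my_charmatrix_blockDiagonal {o : Type*} [Fintype o] [DecidableEq o]
    (M : o → Matrix n n R) :
    charmatrix (blockDiagonal M) = blockDiagonal (fun k => charmatrix (M k)) := by
  ext ⟨i, k⟩ ⟨j, l⟩
  by_cases h : (⟨i, k⟩ : n × o) = ⟨j, l⟩
  · obtain ⟨h1, h2⟩ := Prod.mk.injEq .. ▸ h
    subst h1; subst h2
    simp [charmatrix_apply_eq, blockDiagonal_apply]
  · rw [charmatrix_apply_ne _ _ _ h]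
    by_cases hkl : k = l
    · subst hkl
      have hij : i ≠ j := fun hij => h (by rw [hij])
      simp [blockDiagonal_apply, charmatrix_apply_ne _ _ _ hij]
    · simp [blockDiagonal_apply, hkl]

lemma my_charpoly_blockDiagonal {o : Type*} [Fintype o] [DecidableEq o]
    (M : o → Matrix n n R) :
    (blockDiagonal M).charpoly = ∏ k, (M k).charpoly := by
  rw [Matrix.charpoly, my_charmatrix_blockDiagonal, det_blockDiagonal]
  rfl

lemma my_herm_affine_charpoly {A : Matrix n n ℝ} (hA : A.IsHermitian) (a b : ℝ) :
    (a • A + b • (1 : Matrix n n ℝ)).charpoly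
      = ∏ i, (X - C (a * hA.eigenvalues i + b)) := by
  have hU := hA.spectral_theorem
  set U : Matrix n n ℝ := (hA.eigenvectorUnitary : Matrix n n ℝ) with hUdef
  have hunit : star U * U = 1 := Unitary.star_mul_self_of_mem hA.eigenvectorUnitary.2
  have hdetU : IsUnit (star U).det := by
    apply IsUnit.of_mul_eq_one
    rw [← Matrix.det_mul, hunit, Matrix.det_one]
  have hsim : star U * (a • A + b • 1)
      = (a • (diagonal (RCLike.ofReal ∘ hA.eigenvalues)) + b • 1) * star U := by
    rw [Matrix.mul_add, Matrix.add_mul, Matrix.mul_smul, Matrix.smul_mul,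
      Matrix.mul_smul, Matrix.smul_mul, Matrix.mul_one, Matrix.one_mul]
    congr 2
    conv_lhs => rw [hU, Unitary.conjStarAlgAut_apply, ← hUdef]
    rw [← Matrix.mul_assoc, ← Matrix.mul_assoc, hunit, Matrix.one_mul]
  rw [my_charpoly_similar hdetU hsim]
  have : a • (diagonal (RCLike.ofReal ∘ hA.eigenvalues)) + b • (1 : Matrix n n ℝ)
      = diagonal (fun i => a * hA.eigenvalues i + b) := by
    ext i j
    by_cases h : i = j
    · subst h
      simp [Matrix.one_apply_eq]
    · simp [Matrix.one_apply_ne h, Matrix.diagonal_apply_ne _ h]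
  rw [this, my_charpoly_diagonal]

lemma my_roots_prod_linear {ι : Type*} [Fintype ι] (f : ι → ℝ) :
    (∏ i, (X - C (f i))).roots = Finset.univ.val.map f := by
  rw [Polynomial.roots_prod]
  · simp only [Polynomial.roots_X_sub_C]
    exact Multiset.bind_singleton Finset.univ.val f
  · apply Finset.prod_ne_zero_iff.mpr
    intro i _
    exact X_sub_C_ne_zero (f i)

lemma degR_eq {V : Type} [Fintype V] (G : SimpleGraph V) [DecidableRel G.Adj]
    [∀ v, Fintype (G.neighborSet v)] (v : V) : degR G v = (G.degree v : ℝ) := by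
  unfold degR
  congr!

lemma degree_sum {V : Type} [Fintype V] [DecidableEq V] (G : SimpleGraph V)
    [DecidableRel G.Adj] (v : V) :
    ((G.degree v : ℕ) : ℝ) = ∑ w, (if G.Adj v w then (1 : ℝ) else 0) := by
  rw [SimpleGraph.degree, neighborFinset_eq_filter, Finset.card_filter]
  push_cast
  simp

lemma signlessLaplacian_apply {V : Type} [Fintype V] [DecidableEq V]
    (G : SimpleGraph V) [h : DecidableRel G.Adj] (u v : V) :
    signlessLaplacian G u v =
      (if u = v then ∑ w, (if G.Adj u w then (1:ℝ) else 0) else 0) +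
      (if G.Adj u v then 1 else 0) := by
  unfold signlessLaplacian
  have hinst : Classical.decRel G.Adj = h := Subsingleton.elim _ _
  rw [hinst]
  rw [Matrix.add_apply, Matrix.diagonal_apply, SimpleGraph.adjMatrix_apply]
  congr 1
  by_cases huv : u = v
  · subst huv
    simp [degree_sum]
  · simp [huv]

lemma blowup_compl_adj {V : Type} (G : SimpleGraph V) (t : ℕ) (a b : V × Fin t) :
    (blowup G t)ᶜ.Adj a b ↔ a ≠ b ∧ ¬ G.Adj a.1 b.1 := Iff.rfl

lemma blowup_deg_sum {V : Type} [Fintype V] [DecidableEq V] (G : SimpleGraph V)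
    [DecidableRel G.Adj] (t : ℕ) (ht : 1 ≤ t)
    [DecidableRel (blowup G t)ᶜ.Adj] [DecidableRel Gᶜ.Adj] (u : V) (i : Fin t) :
    ∑ x : V × Fin t, (if (blowup G t)ᶜ.Adj (u,i) x then (1:ℝ) else 0)
      = t * (∑ w, if Gᶜ.Adj u w then (1:ℝ) else 0) + ((t:ℝ) - 1) := by
  rw [Fintype.sum_prod_type]
  have key : ∀ w, (∑ k : Fin t, if (blowup G t)ᶜ.Adj (u,i) (w,k) then (1:ℝ) else 0)
      = (if w = u then ((t:ℝ) - 1) else 0)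
        + (t:ℝ) * (if Gᶜ.Adj u w then 1 else 0) := by
    intro w
    by_cases hw : w = u
    · subst hw
      have h1 : ∀ k : Fin t, ((blowup G t)ᶜ.Adj (w,i) (w,k) ↔ ¬ (k = i)) := by
        intro k
        rw [blowup_compl_adj]
        constructor
        · rintro ⟨hne, -⟩ rfl; exact hne rfl
        · intro hk
          exact ⟨fun hh => hk (by simpa using (Prod.mk.injEq .. ▸ hh).2.symm),
            G.irrefl⟩
      have h2 : ∀ k : Fin t, (if (blowup G t)ᶜ.Adj (w,i) (w,k) then (1:ℝ) else 0)
          = 1 - (if k = i then 1 else 0) := by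
        intro k
        by_cases hk : k = i <;> simp [h1 k, hk]
      rw [Finset.sum_congr rfl (fun k _ => h2 k), Finset.sum_sub_distrib]
      simp [Finset.sum_ite_eq', Finset.card_univ, G.irrefl]
    · have h1 : ∀ k : Fin t, ((blowup G t)ᶜ.Adj (u,i) (w,k) ↔ ¬ G.Adj u w) := by
        intro k
        rw [blowup_compl_adj]
        constructor
        · exact fun h => h.2
        · intro h
          exact ⟨fun hh => hw (by simpa using ((Prod.mk.injEq .. ▸ hh).1).symm), h⟩
      have h3 : Gᶜ.Adj u w ↔ ¬ G.Adj u w := by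
        rw [SimpleGraph.compl_adj]
        exact ⟨fun h => h.2, fun h => ⟨fun he => hw he.symm, h⟩⟩
      have h2 : ∀ k : Fin t, (if (blowup G t)ᶜ.Adj (u,i) (w,k) then (1:ℝ) else 0)
          = (if Gᶜ.Adj u w then 1 else 0) := by
        intro k
        by_cases hk : G.Adj u w <;> simp [h1 k, h3, hk]
      rw [Finset.sum_congr rfl (fun k _ => h2 k), Finset.sum_const, Finset.card_univ]
      simp [hw, mul_comm]
  simp only [key]
  rw [Finset.sum_add_distrib, ← Finset.mul_sum]
  simp [Finset.sum_ite_eq', add_comm]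

lemma degR_sum {V : Type} [Fintype V] [DecidableEq V] (G : SimpleGraph V)
    [DecidableRel G.Adj] (v : V) :
    degR G v = ∑ w, (if G.Adj v w then (1 : ℝ) else 0) := by
  rw [degR_eq, degree_sum]

lemma Q_blowup {V : Type} [Fintype V] [DecidableEq V] (G : SimpleGraph V)
    (t : ℕ) (ht : 1 ≤ t) :
    signlessLaplacian ((blowup G t)ᶜ) =
      (((t:ℝ) • Matrix.diagonal (degR Gᶜ) + ((t:ℝ) - 2) • 1)
          ⊗ₖ (1 : Matrix (Fin t) (Fin t) ℝ))
      + ((signlessLaplacian Gᶜ - Matrix.diagonal (degR Gᶜ) + 1) ⊗ₖ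
          vecMulVec (fun _ : Fin t => (1:ℝ)) (fun _ => 1)) := by
  classical
  ext ⟨u, i⟩ ⟨v, j⟩
  rw [signlessLaplacian_apply]
  simp only [Matrix.add_apply, kroneckerMap_apply, Matrix.sub_apply, Matrix.smul_apply,
    vecMulVec_apply, smul_eq_mul]
  rw [signlessLaplacian_apply Gᶜ u v]
  by_cases huv : u = v
  · subst huv
    have hdiag : Matrix.diagonal (degR Gᶜ) u u = ∑ w, (if Gᶜ.Adj u w then (1:ℝ) else 0) := by
      rw [Matrix.diagonal_apply_eq, degR_sum]
    rw [hdiag]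
    by_cases hij : i = j
    · subst hij
      rw [if_pos rfl, if_pos rfl, blowup_deg_sum G t ht u i]
      simp [Matrix.one_apply, SimpleGraph.irrefl]
      ring
    · have hne : ((u,i) : V × Fin t) ≠ (u,j) := by simp [hij]
      rw [if_neg hne]
      have hadj : (blowup G t)ᶜ.Adj (u,i) (u,j) := ⟨hne, G.irrefl⟩
      rw [if_pos hadj]
      simp [Matrix.one_apply, hij, SimpleGraph.irrefl]
  · have hne : ((u,i) : V × Fin t) ≠ (v,j) := by simp [huv]
    rw [if_neg hne, if_neg huv]
    have hd : Matrix.diagonal (degR Gᶜ) u v = 0 := Matrix.diagonal_apply_ne _ huv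
    have h1 : (1 : Matrix V V ℝ) u v = 0 := Matrix.one_apply_ne huv
    rw [hd, h1]
    have hadj : (blowup G t)ᶜ.Adj (u,i) (v,j) ↔ ¬ G.Adj u v :=
      ⟨fun h => h.2, fun h => ⟨hne, h⟩⟩
    have hadj' : Gᶜ.Adj u v ↔ ¬ G.Adj u v :=
      ⟨fun h => h.2, fun h => ⟨huv, h⟩⟩
    by_cases hG : G.Adj u v <;> simp [hadj, hadj', hG]

section rankone
variable {m : Type*} [Fintype m] [DecidableEq m]

lemma my_vecMulVec_mul (a b c d : m → ℝ) :
    vecMulVec a b * vecMulVec c d = (b ⬝ᵥ c) • vecMulVec a d := by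
  ext i j
  simp only [Matrix.mul_apply, vecMulVec_apply, Matrix.smul_apply, dotProduct, smul_eq_mul]
  rw [Finset.sum_mul]
  exact Finset.sum_congr rfl fun k _ => by ring

/-- distinguished basis vector -/
def ev (z : m) : m → ℝ := fun k => if k = z then 1 else 0

lemma dot_one_ev (z : m) : (fun _ : m => (1:ℝ)) ⬝ᵥ ev z = 1 := by
  simp [dotProduct, ev, Finset.sum_ite_eq']

lemma dot_ev_one (z : m) : ev z ⬝ᵥ (fun _ : m => (1:ℝ)) = 1 := by
  simp [dotProduct, ev, Finset.sum_ite_eq']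

lemma dot_ev_ev (z : m) : ev z ⬝ᵥ ev z = 1 := by
  simp [dotProduct, ev, Finset.sum_ite_eq']

lemma dot_one_one : (fun _ : m => (1:ℝ)) ⬝ᵥ (fun _ : m => (1:ℝ)) = (Fintype.card m : ℝ) := by
  simp [dotProduct]

/-- the change of basis matrix -/
noncomputable def Fmat (z : m) : Matrix m m ℝ :=
  1 + vecMulVec (fun _ => 1) (ev z) - vecMulVec (ev z) (fun _ => 1)

noncomputable def Fmatinv (z : m) : Matrix m m ℝ :=
  1 - vecMulVec (ev z) (ev z) + (2 / (Fintype.card m : ℝ)) • vecMulVec (ev z) (fun _ => 1)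
    - (1 / (Fintype.card m : ℝ)) • vecMulVec (fun _ => 1) (fun _ => 1)

lemma Fmat_mul_Fmatinv (z : m) (hc : (Fintype.card m : ℝ) ≠ 0) :
    Fmat z * Fmatinv z = 1 := by
  unfold Fmat Fmatinv
  simp only [Matrix.mul_add, Matrix.mul_sub, Matrix.add_mul, Matrix.sub_mul,
    Matrix.one_mul, Matrix.mul_one, Matrix.mul_smul, Matrix.smul_mul,
    my_vecMulVec_mul, dot_one_ev, dot_ev_one, dot_ev_ev, dot_one_one]
  match_scalars <;> field_simp <;> norm_num

lemma J_mul_Fmat (z : m) :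
    vecMulVec (fun _ : m => (1:ℝ)) (fun _ => 1) * Fmat z
      = (Fintype.card m : ℝ) • vecMulVec (fun _ => 1) (ev z) := by
  unfold Fmat
  simp only [Matrix.mul_add, Matrix.mul_sub, Matrix.mul_one,
    my_vecMulVec_mul, dot_one_ev, dot_ev_one, dot_ev_ev, dot_one_one]
  match_scalars <;> ring

lemma Fmat_mul_E (z : m) :
    Fmat z * vecMulVec (ev z) (ev z) = vecMulVec (fun _ => 1) (ev z) := by
  unfold Fmat
  simp only [Matrix.add_mul, Matrix.sub_mul, Matrix.one_mul,
    my_vecMulVec_mul, dot_one_ev, dot_ev_one, dot_ev_ev, dot_one_one]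
  match_scalars <;> ring

end rankone

lemma degR_compl {V : Type} [Fintype V] [DecidableEq V] (G : SimpleGraph V) (v : V) :
    degR Gᶜ v = (Fintype.card V : ℝ) - 1 - degR G v := by
  classical
  rw [degR_sum, degR_sum]
  have key : ∀ w, (if Gᶜ.Adj v w then (1:ℝ) else 0) + (if G.Adj v w then (1:ℝ) else 0)
      = 1 - (if w = v then 1 else 0) := by
    intro w
    by_cases hw : w = v
    · subst hw; simp [SimpleGraph.irrefl]
    · have : Gᶜ.Adj v w ↔ ¬ G.Adj v w :=
        ⟨fun h => h.2, fun h => ⟨fun he => hw he.symm, h⟩⟩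
      by_cases hG : G.Adj v w <;> simp [this, hG, hw]
  have := Finset.sum_congr rfl (fun w (_ : w ∈ Finset.univ) => key w)
  rw [Finset.sum_add_distrib, Finset.sum_sub_distrib] at this
  simp only [Finset.sum_const, Finset.card_univ, nsmul_eq_mul, mul_one,
    Finset.sum_ite_eq', Finset.mem_univ, if_pos] at this
  linarith [this]


end Aux

open Kronecker Polynomial in
/-- For `t ≥ 2`, the signless Laplacian eigenvalues of the complement
of the blowup `G^(t)` are `t·q̄ᵢ + 2(t-1)` for the signless Laplacian eigenvalues
`q̄₁, …, q̄ₙ` of the complement of `G`, together with each of `tn - tdᵢ - 2` repeated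
`t - 1` times. -/
theorem qSpectrum_compl_blowup {V : Type} [Fintype V] [DecidableEq V]
    (G : SimpleGraph V) (t : ℕ) (ht : 2 ≤ t) :
    qSpectrum ((blowup G t)ᶜ) =
      Finset.univ.val.map
        (fun i => (t : ℝ) * (signlessLaplacian_isHermitian Gᶜ).eigenvalues i +
          2 * ((t : ℝ) - 1)) +
      (t - 1) • Finset.univ.val.map
        (fun v : V => (t : ℝ) * (Fintype.card V) - (t : ℝ) * degR G v - 2) := by
  classical
  haveI : NeZero t := ⟨by omega⟩
  have hcard : (Fintype.card (Fin t) : ℝ) ≠ 0 := by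
    rw [Fintype.card_fin]
    exact_mod_cast (by omega : t ≠ 0)
  set z : Fin t := 0 with hz
  set Db : Matrix V V ℝ := Matrix.diagonal (degR Gᶜ) with hDb
  set Qb : Matrix V V ℝ := signlessLaplacian Gᶜ with hQb
  set M : Matrix V V ℝ := (t:ℝ) • Db + ((t:ℝ) - 2) • 1 with hM
  set N : Matrix V V ℝ := Qb - Db + 1 with hN
  set B0 : Matrix V V ℝ := (t:ℝ) • Qb + (2 * ((t:ℝ) - 1)) • 1 with hB0
  set lam : V → ℝ := fun v => (t:ℝ) * (Fintype.card V) - (t:ℝ) * degR G v - 2 with hlam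
  set K : Matrix (V × Fin t) (V × Fin t) ℝ := (1 : Matrix V V ℝ) ⊗ₖ Fmat z with hK
  set Kinv : Matrix (V × Fin t) (V × Fin t) ℝ := (1 : Matrix V V ℝ) ⊗ₖ Fmatinv z with hKinvdef
  set B : Matrix (V × Fin t) (V × Fin t) ℝ :=
    Matrix.blockDiagonal (fun k : Fin t => if k = z then M + (t:ℝ) • N else M) with hBdef
  have hB0M : B0 = M + (t:ℝ) • N := by
    rw [hB0, hM, hN, hQb, hDb]
    module
  have hQH : signlessLaplacian ((blowup G t)ᶜ)
      = M ⊗ₖ (1 : Matrix (Fin t) (Fin t) ℝ)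
        + N ⊗ₖ vecMulVec (fun _ : Fin t => (1:ℝ)) (fun _ => 1) :=
    Q_blowup G t (by omega)
  have hBkron : B = M ⊗ₖ (1 : Matrix (Fin t) (Fin t) ℝ) + ((t:ℝ) • N) ⊗ₖ vecMulVec (ev z) (ev z) := by
    rw [hBdef]
    ext ⟨u, k⟩ ⟨v, l⟩
    rw [Matrix.blockDiagonal_apply]
    simp only [Matrix.add_apply, kroneckerMap_apply, Matrix.smul_apply, vecMulVec_apply,
      ev, smul_eq_mul]
    simp only [Matrix.one_apply]
    by_cases hk : k = z
    · by_cases hl : l = z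
      · have hkl : k = l := hk.trans hl.symm
        simp [hkl, hk, hl]
      · have hkl : ¬ k = l := fun h => hl (h ▸ hk)
        have hzl : ¬ z = l := fun h => hl h.symm
        simp [hkl, hk, hl, hzl]
    · by_cases hl : l = z
      · have hkl : ¬ k = l := fun h => hk (h.trans hl)
        simp [hkl, hk, hl]
      · by_cases hkl : k = l <;> simp [hkl, hk, hl]
  have hKB : signlessLaplacian ((blowup G t)ᶜ) * K = K * B := by
    rw [hQH, hBkron, hK]
    simp only [Matrix.add_mul, Matrix.mul_add, ← mul_kronecker_mul, Matrix.one_mul,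
      Matrix.mul_one, J_mul_Fmat z, Fmat_mul_E z, kronecker_smul, smul_kronecker,
      smul_mul_assoc, mul_smul_comm, Fintype.card_fin]
  have hKKinv : K * Kinv = 1 := by
    rw [hK, hKinvdef, ← mul_kronecker_mul, Matrix.one_mul, Fmat_mul_Fmatinv z hcard,
      one_kronecker_one]
  have hKinvK : Kinv * K = 1 := mul_eq_one_comm.mp hKKinv
  have hdetKinv : IsUnit Kinv.det := by
    apply IsUnit.of_mul_eq_one K.det
    rw [← Matrix.det_mul, hKinvK, Matrix.det_one]
  have hsim : Kinv * signlessLaplacian ((blowup G t)ᶜ) = B * Kinv := by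
    calc Kinv * signlessLaplacian ((blowup G t)ᶜ)
        = Kinv * signlessLaplacian ((blowup G t)ᶜ) * (K * Kinv) := by
          rw [hKKinv, Matrix.mul_one]
      _ = Kinv * (signlessLaplacian ((blowup G t)ᶜ) * K) * Kinv := by
          simp only [Matrix.mul_assoc]
      _ = Kinv * (K * B) * Kinv := by rw [hKB]
      _ = B * Kinv := by
          rw [← Matrix.mul_assoc, hKinvK, Matrix.one_mul]
  have hcp : (signlessLaplacian ((blowup G t)ᶜ)).charpoly = B.charpoly :=
    my_charpoly_similar hdetKinv hsim
  have hcpB : B.charpoly = B0.charpoly * M.charpoly ^ (t - 1) := by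
    rw [hBdef, my_charpoly_blockDiagonal,
      ← Finset.mul_prod_erase Finset.univ _ (Finset.mem_univ z), if_pos rfl, ← hB0M]
    congr 1
    rw [Finset.prod_congr rfl (fun k hk => by rw [if_neg (Finset.ne_of_mem_erase hk)]),
      Finset.prod_const, Finset.card_erase_of_mem (Finset.mem_univ z),
      Finset.card_univ, Fintype.card_fin]
  have hMdiag : M = Matrix.diagonal lam := by
    rw [hM, hDb, hlam]
    ext u v
    by_cases h : u = v
    · subst h
      simp only [Matrix.add_apply, Matrix.smul_apply, Matrix.diagonal_apply_eq,
        Matrix.one_apply_eq, smul_eq_mul, mul_one]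
      rw [degR_compl]
      ring
    · simp [Matrix.diagonal_apply_ne _ h, Matrix.one_apply_ne h]
  have hcpB0 : B0.charpoly = ∏ i, (Polynomial.X - Polynomial.C
      ((t:ℝ) * (signlessLaplacian_isHermitian Gᶜ).eigenvalues i + 2 * ((t:ℝ) - 1))) := by
    rw [hB0, hQb]
    exact my_herm_affine_charpoly (signlessLaplacian_isHermitian Gᶜ) _ _
  have hcpM : M.charpoly = ∏ v, (Polynomial.X - Polynomial.C (lam v)) := by
    rw [hMdiag, my_charpoly_diagonal]
  have hcpQH : (signlessLaplacian ((blowup G t)ᶜ)).charpoly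
      = ∏ i, (Polynomial.X - Polynomial.C
          ((signlessLaplacian_isHermitian ((blowup G t)ᶜ)).eigenvalues i)) := by
    have h := my_herm_affine_charpoly (signlessLaplacian_isHermitian ((blowup G t)ᶜ)) 1 0
    simpa using h
  have hmon1 : (∏ i, (Polynomial.X - Polynomial.C
      ((t:ℝ) * (signlessLaplacian_isHermitian Gᶜ).eigenvalues i + 2 * ((t:ℝ) - 1)))).Monic :=
    Polynomial.monic_prod_of_monic _ _ fun _ _ => Polynomial.monic_X_sub_C _
  have hmon2 : ((∏ v, (Polynomial.X - Polynomial.C (lam v))) ^ (t - 1)).Monic :=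
    (Polynomial.monic_prod_of_monic _ _ fun _ _ => Polynomial.monic_X_sub_C _).pow _
  have hfinal : (∏ i, (Polynomial.X - Polynomial.C
        ((signlessLaplacian_isHermitian ((blowup G t)ᶜ)).eigenvalues i)))
      = (∏ i, (Polynomial.X - Polynomial.C
          ((t:ℝ) * (signlessLaplacian_isHermitian Gᶜ).eigenvalues i + 2 * ((t:ℝ) - 1))))
        * (∏ v, (Polynomial.X - Polynomial.C (lam v))) ^ (t - 1) := by
    rw [← hcpQH, hcp, hcpB, hcpB0, hcpM]
  unfold qSpectrum
  rw [← my_roots_prod_linear ((signlessLaplacian_isHermitian ((blowup G t)ᶜ)).eigenvalues),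
    hfinal, Polynomial.roots_mul (hmon1.mul hmon2).ne_zero, Polynomial.roots_pow,
    my_roots_prod_linear, my_roots_prod_linear]
end

section
/- For every graph G and every integer t ≥ 1, the smallest signless Laplacian eigenvalue of the blowup satisfies q_min(G^(t)) = t·q_min(G). -/
open Matrix SimpleGraph Finset

/- ## Auxiliary machinery -/


lemma rayleigh_lower_s13 {n : Type} [Fintype n] [DecidableEq n] {M : Matrix n n ℝ}
    (hM : M.IsHermitian) (x : n → ℝ) :
    (⨅ i, hM.eigenvalues i) * (x ⬝ᵥ x) ≤ x ⬝ᵥ M *ᵥ x := by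
  set U : Matrix n n ℝ := (hM.eigenvectorUnitary : Matrix n n ℝ) with hU
  have hstar : star U = Uᵀ := by
    rw [Matrix.star_eq_conjTranspose, conjTranspose_eq_transpose_of_trivial]
  set y : n → ℝ := Uᵀ *ᵥ x with hy
  have hUU : U * star U = 1 := (Matrix.mem_unitaryGroup_iff).mp hM.eigenvectorUnitary.2
  have hxy : x ⬝ᵥ x = y ⬝ᵥ y := by
    have h1 : y ⬝ᵥ y = ((U * Uᵀ) *ᵥ x) ⬝ᵥ x := by
      rw [hy, dotProduct_mulVec, ← Matrix.mulVec_transpose, mulVec_mulVec,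
        Matrix.transpose_transpose]
    rw [h1, ← hstar, hUU, one_mulVec]
  have hqf : x ⬝ᵥ M *ᵥ x = ∑ i, hM.eigenvalues i * (y i * y i) := by
    conv_lhs => rw [hM.spectral_theorem, Unitary.conjStarAlgAut_apply]
    rw [← hU, hstar, ← mulVec_mulVec, ← mulVec_mulVec, dotProduct_mulVec,
      ← Matrix.mulVec_transpose, ← hy]
    simp [dotProduct, Matrix.mulVec_diagonal]
    exact Finset.sum_congr rfl fun i _ => by ring
  have hbdd : BddBelow (Set.range hM.eigenvalues) := Set.Finite.bddBelow (Set.finite_range _)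
  rw [hqf, hxy]
  have hdot : y ⬝ᵥ y = ∑ i, y i * y i := rfl
  rw [hdot, Finset.mul_sum]
  refine Finset.sum_le_sum fun i _ => ?_
  have h1 : (⨅ i, hM.eigenvalues i) ≤ hM.eigenvalues i := ciInf_le hbdd i
  nlinarith [mul_self_nonneg (y i)]

noncomputable def adjR {V : Type} [Fintype V] [DecidableEq V] (G : SimpleGraph V) :
    Matrix V V ℝ :=
  letI := Classical.decRel G.Adj
  G.adjMatrix ℝ

lemma signlessLaplacian_eq {V : Type} [Fintype V] [DecidableEq V] (G : SimpleGraph V) :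
    signlessLaplacian G = Matrix.diagonal (degR G) + adjR G := rfl

lemma adjR_apply {V : Type} [Fintype V] [DecidableEq V] (G : SimpleGraph V)
    [DecidableRel G.Adj] (u v : V) : adjR G u v = if G.Adj u v then 1 else 0 := by
  by_cases h : G.Adj u v <;> simp [adjR, h]

lemma adjR_blowup {V : Type} [Fintype V] [DecidableEq V] (G : SimpleGraph V) (t : ℕ)
    (p q : V × Fin t) : adjR (blowup G t) p q = adjR G p.1 q.1 := by
  classical
  rw [adjR_apply, adjR_apply]
  exact if_congr Iff.rfl rfl rfl

lemma adjR_self {V : Type} [Fintype V] [DecidableEq V] (G : SimpleGraph V) (u : V) :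
    adjR G u u = 0 := by
  classical
  rw [adjR_apply]
  simp

lemma degR_eq_sum {V : Type} [Fintype V] [DecidableEq V] (G : SimpleGraph V) (u : V) :
    degR G u = ∑ v, adjR G u v := by
  classical
  unfold degR
  simp [adjR_apply, SimpleGraph.degree, SimpleGraph.neighborFinset,
    Finset.sum_ite_eq, Set.toFinset_card]

lemma degR_blowup {V : Type} [Fintype V] [DecidableEq V] (G : SimpleGraph V) (t : ℕ)
    (p : V × Fin t) : degR (blowup G t) p = (t : ℝ) * degR G p.1 := by
  rw [degR_eq_sum, degR_eq_sum, Fintype.sum_prod_type]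
  simp only [adjR_blowup]
  simp [Finset.mul_sum]

/-- Expansion of the quadratic form of `diagonal f + A`. -/
lemma quad_expand {n : Type} [Fintype n] [DecidableEq n] (f : n → ℝ) (A : Matrix n n ℝ)
    (x : n → ℝ) :
    x ⬝ᵥ (Matrix.diagonal f + A) *ᵥ x
      = (∑ u, f u * (x u * x u)) + ∑ u, ∑ v, A u v * (x u * x v) := by
  rw [Matrix.add_mulVec, dotProduct_add]
  congr 1
  · simp [dotProduct, Matrix.mulVec_diagonal]
    exact Finset.sum_congr rfl fun i _ => by ring
  · simp [dotProduct, Matrix.mulVec, Finset.mul_sum]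
    exact Finset.sum_congr rfl fun i _ => Finset.sum_congr rfl fun j _ => by ring

/-- `qmin G ≤ degR G u` for every vertex. -/
lemma qmin_le_degR {V : Type} [Fintype V] [DecidableEq V] (G : SimpleGraph V) (u : V) :
    qmin G ≤ degR G u := by
  have h : qmin G * ((Pi.single u 1 : V → ℝ) ⬝ᵥ Pi.single u 1)
      ≤ (Pi.single u 1 : V → ℝ) ⬝ᵥ signlessLaplacian G *ᵥ Pi.single u 1 :=
    rayleigh_lower_s13 (signlessLaplacian_isHermitian G) (Pi.single u 1)
  have he : (Pi.single u 1 : V → ℝ) ⬝ᵥ signlessLaplacian G *ᵥ Pi.single u 1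
      = (∑ v, degR G v * ((Pi.single u 1 : V → ℝ) v * (Pi.single u 1 : V → ℝ) v))
        + ∑ v, ∑ w, adjR G v w * ((Pi.single u 1 : V → ℝ) v * (Pi.single u 1 : V → ℝ) w) := by
    rw [signlessLaplacian_eq, quad_expand]
  rw [he] at h
  have h1 : (Pi.single u 1 : V → ℝ) ⬝ᵥ Pi.single u 1 = 1 := by
    simp [dotProduct, Pi.single_apply]
  have h2 : (∑ v, degR G v * ((Pi.single u 1 : V → ℝ) v * (Pi.single u 1 : V → ℝ) v)) = degR G u := by
    rw [Finset.sum_eq_single u]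
    · simp
    · intro b _ hb; simp [Pi.single_apply, hb]
    · simp
  have h3 : (∑ v, ∑ w, adjR G v w * ((Pi.single u 1 : V → ℝ) v * (Pi.single u 1 : V → ℝ) w)) = 0 := by
    rw [Finset.sum_eq_single u]
    · rw [Finset.sum_eq_single u]
      · simp [adjR_self]
      · intro b _ hb; simp [Pi.single_apply, hb]
      · simp
    · intro b _ hb
      apply Finset.sum_eq_zero
      intro c _
      simp [Pi.single_apply, hb]
    · simp
  rw [h1, h2, h3, mul_one, add_zero] at h
  exact h

/-- Lifting a vector along the blowup projection gives an eigen-relation. -/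
lemma sL_blowup_mulVec_lift {V : Type} [Fintype V] [DecidableEq V] (G : SimpleGraph V)
    (t : ℕ) (y : V → ℝ) :
    signlessLaplacian (blowup G t) *ᵥ (fun p => y p.1)
      = fun p => (t : ℝ) * (signlessLaplacian G *ᵥ y) p.1 := by
  funext p
  rw [signlessLaplacian_eq, signlessLaplacian_eq, Matrix.add_mulVec, Matrix.add_mulVec]
  simp only [Pi.add_apply, Matrix.mulVec_diagonal, degR_blowup]
  have : (adjR (blowup G t) *ᵥ fun p => y p.1) p = (t : ℝ) * (adjR G *ᵥ y) p.1 := by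
    simp only [Matrix.mulVec, dotProduct]
    rw [Fintype.sum_prod_type]
    simp only [adjR_blowup]
    simp [Finset.mul_sum]
  rw [this]
  ring

/-- Key quadratic form bound for the blowup. -/
lemma quad_blowup_ge {V : Type} [Fintype V] [DecidableEq V] (G : SimpleGraph V)
    (t : ℕ) (x : V × Fin t → ℝ) :
    (t : ℝ) * qmin G * (x ⬝ᵥ x) ≤ x ⬝ᵥ signlessLaplacian (blowup G t) *ᵥ x := by
  classical
  set X : V → ℝ := fun u => ∑ j, x (u, j) with hX
  set s : V → ℝ := fun u => ∑ j, x (u, j) * x (u, j) with hs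
  have hxx : x ⬝ᵥ x = ∑ u, s u := by
    simp [dotProduct, Fintype.sum_prod_type, hs]
  have hCS : ∀ u, X u * X u ≤ (t : ℝ) * s u := by
    intro u
    have := Finset.sum_mul_sq_le_sq_mul_sq Finset.univ (fun j : Fin t => x (u, j)) (fun _ => 1)
    simp only [mul_one, one_pow, Finset.sum_const, Finset.card_univ, Fintype.card_fin,
      nsmul_eq_mul] at this
    calc X u * X u = (∑ j, x (u, j)) ^ 2 := by rw [hX]; ring
    _ ≤ (∑ j, x (u, j) ^ 2) * t := this
    _ = (t : ℝ) * s u := by rw [hs]; simp only [sq]; ring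
  -- expand the blowup quadratic form
  rw [signlessLaplacian_eq, quad_expand]
  have hdiag : (∑ p : V × Fin t, degR (blowup G t) p * (x p * x p))
      = (t : ℝ) * ∑ u, degR G u * s u := by
    rw [Fintype.sum_prod_type]
    simp only [degR_blowup]
    rw [Finset.mul_sum]
    refine Finset.sum_congr rfl fun u _ => ?_
    simp only [hs, Finset.mul_sum]
    exact Finset.sum_congr rfl fun j _ => by ring
  have hoff : (∑ p : V × Fin t, ∑ q : V × Fin t, adjR (blowup G t) p q * (x p * x q))
      = ∑ u, ∑ v, adjR G u v * (X u * X v) := by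
    rw [Fintype.sum_prod_type]
    refine Finset.sum_congr rfl fun u _ => ?_
    simp only [Fintype.sum_prod_type, adjR_blowup]
    rw [Finset.sum_comm]
    refine Finset.sum_congr rfl fun v _ => ?_
    have hXX : X u * X v = ∑ i, ∑ j, x (u, i) * x (v, j) := by
      rw [hX]
      simp only [Finset.sum_mul_sum]
    rw [hXX, Finset.mul_sum]
    refine Finset.sum_congr rfl fun i _ => ?_
    rw [Finset.mul_sum]
  rw [hdiag, hoff]
  -- quadratic form of G at X
  have hQXr : X ⬝ᵥ signlessLaplacian G *ᵥ X
      = (∑ u, degR G u * (X u * X u)) + ∑ u, ∑ v, adjR G u v * (X u * X v) := by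
    rw [signlessLaplacian_eq, quad_expand]
  have hQX : qmin G * (∑ u, X u * X u)
      ≤ (∑ u, degR G u * (X u * X u)) + ∑ u, ∑ v, adjR G u v * (X u * X v) := by
    have h0 : qmin G * (X ⬝ᵥ X) ≤ X ⬝ᵥ signlessLaplacian G *ᵥ X :=
      rayleigh_lower_s13 (signlessLaplacian_isHermitian G) X
    rw [hQXr] at h0
    exact h0
  have hdeg : ∀ u, qmin G * ((t : ℝ) * s u - X u * X u)
      ≤ degR G u * ((t : ℝ) * s u - X u * X u) := by
    intro u
    exact mul_le_mul_of_nonneg_right (qmin_le_degR G u) (by linarith [hCS u])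
  have hsum := Finset.sum_le_sum (fun u (_ : u ∈ Finset.univ) => hdeg u)
  have expand1 : ∑ u, qmin G * ((t : ℝ) * s u - X u * X u)
      = (t : ℝ) * qmin G * (∑ u, s u) - qmin G * (∑ u, X u * X u) := by
    rw [Finset.mul_sum, Finset.mul_sum, ← Finset.sum_sub_distrib]
    exact Finset.sum_congr rfl fun u _ => by ring
  have expand2 : ∑ u, degR G u * ((t : ℝ) * s u - X u * X u)
      = (t : ℝ) * (∑ u, degR G u * s u) - ∑ u, degR G u * (X u * X u) := by
    rw [Finset.mul_sum, ← Finset.sum_sub_distrib]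
    exact Finset.sum_congr rfl fun u _ => by ring
  rw [expand1, expand2] at hsum
  have hfin : (t : ℝ) * qmin G * (x ⬝ᵥ x) = (t : ℝ) * qmin G * ∑ u, s u :=
    congrArg (fun r => (t : ℝ) * qmin G * r) hxx
  rw [hfin]
  linarith [hQX, hsum]

lemma dot_self_of_unit {n : Type} [Fintype n] (b : EuclideanSpace ℝ n) (hb : ‖b‖ = 1) :
    (b : n → ℝ) ⬝ᵥ (b : n → ℝ) = 1 := by
  have h : (inner ℝ b b : ℝ) = 1 := by
    rw [real_inner_self_eq_norm_sq, hb]; norm_num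
  rw [← h, PiLp.inner_apply]
  simp only [RCLike.inner_apply, conj_trivial, dotProduct]


/-- For every graph `G` and every `t ≥ 1`,
`qmin(G^(t)) = t · qmin(G)`. -/
theorem qmin_blowup {V : Type} [Fintype V] [DecidableEq V]
    (G : SimpleGraph V) (t : ℕ) (ht : 1 ≤ t) :
    qmin (blowup G t) = (t : ℝ) * qmin G := by
  rcases isEmpty_or_nonempty V with hV | hV
  · haveI : IsEmpty (V × Fin t) := ⟨fun p => IsEmpty.false p.1⟩
    unfold qmin
    rw [Real.iInf_of_isEmpty, Real.iInf_of_isEmpty, mul_zero]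
  · haveI : Nonempty (Fin t) := ⟨⟨0, ht⟩⟩
    set hQ := signlessLaplacian_isHermitian G
    set hQb := signlessLaplacian_isHermitian (blowup G t)
    have hbddb : BddBelow (Set.range hQb.eigenvalues) :=
      Set.Finite.bddBelow (Set.finite_range _)
    have hbdd : BddBelow (Set.range hQ.eigenvalues) :=
      Set.Finite.bddBelow (Set.finite_range _)
    apply le_antisymm
    · -- qmin(blowup) ≤ t * qmin G
      obtain ⟨i₀, hi₀⟩ := Finite.exists_min hQ.eigenvalues
      have hq : qmin G = hQ.eigenvalues i₀ :=
        le_antisymm (ciInf_le hbdd i₀) (le_ciInf hi₀)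
      set v : V → ℝ := (hQ.eigenvectorBasis i₀ : EuclideanSpace ℝ V).ofLp with hv
      have hvv : v ⬝ᵥ v = 1 :=
        dot_self_of_unit _ (hQ.eigenvectorBasis.orthonormal.1 i₀)
      set x : V × Fin t → ℝ := fun p => v p.1 with hxdef
      have hxx : x ⬝ᵥ x = (t : ℝ) := by
        have : x ⬝ᵥ x = ∑ u, ∑ _j : Fin t, v u * v u := by
          simp [dotProduct, Fintype.sum_prod_type, hxdef]
        rw [this]
        simp only [Finset.sum_const, Finset.card_univ, Fintype.card_fin, nsmul_eq_mul]
        rw [← Finset.mul_sum]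
        rw [show (∑ u, v u * v u) = v ⬝ᵥ v from rfl, hvv, mul_one]
      have hEig : signlessLaplacian (blowup G t) *ᵥ x = ((t : ℝ) * qmin G) • x := by
        rw [hxdef, sL_blowup_mulVec_lift]
        funext p
        have h2 : signlessLaplacian G *ᵥ v = hQ.eigenvalues i₀ • v :=
          hQ.mulVec_eigenvectorBasis i₀
        rw [h2]
        simp [hq, Pi.smul_apply, smul_eq_mul]
        ring
      have hray := rayleigh_lower_s13 hQb x
      rw [hEig] at hray
      have hrhs : x ⬝ᵥ (((t : ℝ) * qmin G) • x) = ((t : ℝ) * qmin G) * (x ⬝ᵥ x) := by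
        rw [dotProduct_smul, smul_eq_mul]
      rw [hrhs, hxx] at hray
      have ht' : (0 : ℝ) < t := by exact_mod_cast Nat.lt_of_lt_of_le Nat.zero_lt_one ht
      have : qmin (blowup G t) * t ≤ ((t : ℝ) * qmin G) * t := hray
      exact (mul_le_mul_iff_of_pos_right ht').mp this
    · -- t * qmin G ≤ qmin(blowup)
      apply le_ciInf
      intro j
      set w : V × Fin t → ℝ := (hQb.eigenvectorBasis j : EuclideanSpace ℝ (V × Fin t)).ofLp with hw
      have hww : w ⬝ᵥ w = 1 :=
        dot_self_of_unit _ (hQb.eigenvectorBasis.orthonormal.1 j)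
      have hEig : signlessLaplacian (blowup G t) *ᵥ w = hQb.eigenvalues j • w :=
        hQb.mulVec_eigenvectorBasis j
      have h := quad_blowup_ge G t w
      rw [hEig, dotProduct_smul, smul_eq_mul, hww, mul_one] at h
      linarith [h]
end
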